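/- arXiv:0809.2947 — 6 statements merged into one kernel-verified Lean document; each statement's English description precedes it below -/
import Mathlib

section
/- An integral domain D is a ∗-CICD if and only if D is a ∗-multiplication domain. -/
open FractionalIdeal

/-- A star operation on an integral domain `D` with fraction field `K`, acting on
fractional ideals: it fixes `D`, is extensive, monotone, idempotent (all on nonzero
ideals), and commutes with multiplication by nonzero principal fractional ideals. -/
structure StarOp (D : Type*) [CommRing D] [IsDomain D] (K : Type*) [Field K]
    [Algebra D K] [IsFractionRing D K] where
  star : FractionalIdeal (nonZeroDivisors D) K → FractionalIdeal (nonZeroDivisors D) K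
  star_one : star 1 = 1
  le_star : ∀ {A}, A ≠ 0 → A ≤ star A
  star_mono : ∀ {A B}, A ≠ 0 → A ≤ B → star A ≤ star B
  star_idem : ∀ {A}, A ≠ 0 → star (star A) = star A
  star_smul : ∀ {A : FractionalIdeal (nonZeroDivisors D) K} (x : K), x ≠ 0 → A ≠ 0 →
    star (spanSingleton (nonZeroDivisors D) x * A) = spanSingleton (nonZeroDivisors D) x * star A

variable {D K : Type*} [CommRing D] [IsDomain D] [Field K] [Algebra D K] [IsFractionRing D K]

lemma fexists_mem_ne_zero {I : FractionalIdeal (nonZeroDivisors D) K} (hI : I ≠ 0) :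
    ∃ x ∈ I, x ≠ 0 := by
  by_contra h
  push_neg at h
  exact hI (FractionalIdeal.eq_zero_iff.mpr h)

lemma fmul_ne_zero {I J : FractionalIdeal (nonZeroDivisors D) K} (hI : I ≠ 0) (hJ : J ≠ 0) :
    I * J ≠ 0 := by
  obtain ⟨x, hx, hx0⟩ := fexists_mem_ne_zero hI
  obtain ⟨y, hy, hy0⟩ := fexists_mem_ne_zero hJ
  intro h
  have hm := FractionalIdeal.mul_mem_mul hx hy
  rw [h] at hm
  exact mul_ne_zero hx0 hy0 ((FractionalIdeal.mem_zero_iff _).mp hm)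

lemma StarOp.star_ne_zero (s : StarOp D K) {A : FractionalIdeal (nonZeroDivisors D) K}
    (hA : A ≠ 0) : s.star A ≠ 0 := fun h => hA (FractionalIdeal.le_zero_iff.mp (h ▸ s.le_star hA))

/-- Key lemma: `(A∗ B)∗ = (A B)∗`. -/
lemma StarOp.star_star_mul (s : StarOp D K) {X A : FractionalIdeal (nonZeroDivisors D) K}
    (hX : X ≠ 0) (hA : A ≠ 0) : s.star (s.star X * A) = s.star (X * A) := by
  have hXA : X * A ≠ 0 := fmul_ne_zero hX hA
  have hsX : s.star X ≠ 0 := s.star_ne_zero hX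
  apply le_antisymm
  · have h2 : s.star X * A ≤ s.star (X * A) := by
      rw [mul_comm]
      refine mul_le.mpr fun a ha x hx => ?_
      by_cases haz : a = 0
      · rw [haz, zero_mul]; exact zero_mem _
      · have hspan : spanSingleton (nonZeroDivisors D) a ≠ 0 :=
          spanSingleton_ne_zero_iff.mpr haz
        have hle : spanSingleton (nonZeroDivisors D) a * X ≤ X * A := by
          rw [mul_comm X A]
          exact mul_left_mono (a := X) (spanSingleton_le_iff_mem.mpr ha)
        have hmono := s.star_mono (fmul_ne_zero hspan hX) hle
        rw [s.star_smul a haz hX] at hmono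
        exact hmono (mul_mem_mul (mem_spanSingleton_self _ a) hx)
    calc s.star (s.star X * A) ≤ s.star (s.star (X * A)) :=
          s.star_mono (fmul_ne_zero hsX hA) h2
      _ = s.star (X * A) := s.star_idem hXA
  · exact s.star_mono hXA (mul_left_mono (a := A) (s.le_star hX))

lemma inv_ne_zero' {B : FractionalIdeal (nonZeroDivisors D) K} (hB : B ≠ 0) : B⁻¹ ≠ 0 := by
  obtain ⟨a, haS, ha⟩ := B.isFractional
  have hane : algebraMap D K a ≠ 0 := by
    simpa using (map_ne_zero_iff _ (IsFractionRing.injective D K)).mpr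
      (nonZeroDivisors.ne_zero haS)
  have hmem : algebraMap D K a ∈ B⁻¹ := by
    rw [FractionalIdeal.mem_inv_iff hB]
    intro y hy
    obtain ⟨c, hc⟩ := ha y hy
    rw [Algebra.smul_def] at hc
    exact (FractionalIdeal.mem_one_iff _).mpr ⟨c, hc⟩
  intro h
  rw [h] at hmem
  exact hane ((FractionalIdeal.mem_zero_iff _).mp hmem)

/-- `D` is a `∗`-CICD iff `D` is a `∗`-multiplication domain. -/
theorem starCICD_iff_starMultiplication (s : StarOp D K) :
    (∀ A : FractionalIdeal (nonZeroDivisors D) K, A ≠ 0 → s.star (A * A⁻¹) = 1) ↔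
    (∀ A B : FractionalIdeal (nonZeroDivisors D) K, A ≠ 0 → B ≠ 0 → s.star A ≤ s.star B →
      ∃ C : FractionalIdeal (nonZeroDivisors D) K, C ≠ 0 ∧ s.star A = s.star (B * C)) := by
  constructor
  · intro hCICD A B hA hB _
    have hBi : B⁻¹ ≠ 0 := inv_ne_zero' hB
    refine ⟨A * B⁻¹, fmul_ne_zero hA hBi, ?_⟩
    have h1 : B * (A * B⁻¹) = B * B⁻¹ * A := by ring
    rw [h1, ← s.star_star_mul (fmul_ne_zero hB hBi) hA, hCICD B hB, one_mul]
  · intro hMul A hA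
    -- pick a nonzero element a ∈ A
    obtain ⟨a, haA, haz⟩ := Submodule.exists_mem_ne_zero_of_ne_bot
      (by simpa [← FractionalIdeal.coeToSubmodule_eq_bot] using hA :
        (A : Submodule D K) ≠ ⊥)
    have haA' : a ∈ A := haA
    have hspan : spanSingleton (nonZeroDivisors D) a ≠ 0 := spanSingleton_ne_zero_iff.mpr haz
    have hstar_span : s.star (spanSingleton (nonZeroDivisors D) a) =
        spanSingleton (nonZeroDivisors D) a := by
      have := s.star_smul (A := 1) a haz one_ne_zero
      rwa [mul_one, s.star_one, mul_one] at this
    have hle : s.star (spanSingleton (nonZeroDivisors D) a) ≤ s.star A := by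
      rw [hstar_span]
      exact le_trans (spanSingleton_le_iff_mem.mpr haA') (s.le_star hA)
    obtain ⟨C, hC, hAC⟩ := hMul (spanSingleton (nonZeroDivisors D) a) A hspan hA hle
    rw [hstar_span] at hAC
    -- so spanSingleton a = star (A * C)
    have hACne : A * C ≠ 0 := fmul_ne_zero hA hC
    have hinv : spanSingleton (nonZeroDivisors D) a⁻¹ ≠ 0 :=
      spanSingleton_ne_zero_iff.mpr (inv_ne_zero haz)
    have hkey : s.star (spanSingleton (nonZeroDivisors D) a⁻¹ * (A * C)) = 1 := by
      rw [s.star_smul a⁻¹ (inv_ne_zero haz) hACne, ← hAC,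
        spanSingleton_mul_spanSingleton, inv_mul_cancel₀ haz, spanSingleton_one]
    have hle1 : spanSingleton (nonZeroDivisors D) a⁻¹ * (A * C) ≤ 1 := by
      have := s.le_star (fmul_ne_zero hinv hACne)
      rwa [hkey] at this
    -- so C * spanSingleton a⁻¹ ≤ A⁻¹
    have hle2 : C * spanSingleton (nonZeroDivisors D) a⁻¹ ≤ A⁻¹ := by
      rw [FractionalIdeal.inv_eq, FractionalIdeal.le_div_iff_mul_le hA]
      calc C * spanSingleton (nonZeroDivisors D) a⁻¹ * A
          = spanSingleton (nonZeroDivisors D) a⁻¹ * (A * C) := by ring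
        _ ≤ 1 := hle1
    have hle3 : spanSingleton (nonZeroDivisors D) a⁻¹ * (A * C) ≤ A * A⁻¹ := by
      have : spanSingleton (nonZeroDivisors D) a⁻¹ * (A * C) =
          A * (C * spanSingleton (nonZeroDivisors D) a⁻¹) := by ring
      rw [this]
      exact mul_right_mono (a := A) hle2
    have hAAi : A * A⁻¹ ≠ 0 := fmul_ne_zero hA (inv_ne_zero' hA)
    apply le_antisymm
    · have : A * A⁻¹ ≤ 1 := by
        rw [FractionalIdeal.inv_eq]; exact FractionalIdeal.mul_one_div_le_one
      have := s.star_mono hAAi this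
      rwa [s.star_one] at this
    · have := s.star_mono (fmul_ne_zero hinv hACne) hle3
      rwa [hkey] at this
end

section
/- An integral domain D is a (∗,v)-CICD if and only if (AB)⁻¹ = (A⁻¹B⁻¹)^∗ for all nonzero fractional ideals A, B of D. -/
open FractionalIdeal

variable {D K : Type*} [CommRing D] [IsDomain D] [Field K] [Algebra D K] [IsFractionRing D K]

namespace StarVCICDAux

local notation "F" => FractionalIdeal (nonZeroDivisors D) K

theorem fi_mul_inv_le_one {I : F} : I * I⁻¹ ≤ 1 := by
  rw [inv_eq]; exact mul_one_div_le_one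

theorem fi_inv_mul_le_one {I : F} : I⁻¹ * I ≤ 1 := by
  rw [mul_comm]; exact fi_mul_inv_le_one

theorem fi_inv_ne_zero {I : F} (hI : I ≠ 0) : I⁻¹ ≠ 0 := by
  have hd : (algebraMap D K I.den : K) ≠ 0 :=
    IsFractionRing.to_map_ne_zero_of_mem_nonZeroDivisors I.den.2
  have hmem : (algebraMap D K I.den : K) ∈ I⁻¹ := by
    rw [inv_eq, ← spanSingleton_le_iff_mem, le_div_iff_mul_le hI, den_mul_self_eq_num']
    exact coeIdeal_le_one
  intro h
  rw [h] at hmem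
  exact hd (by simpa using hmem)

theorem fi_mul_ne_zero {I J : F} (hI : I ≠ 0) (hJ : J ≠ 0) : I * J ≠ 0 := by
  obtain ⟨x, hxI, hx0⟩ : ∃ x ∈ I, x ≠ 0 := by
    by_contra h; push_neg at h; exact hI (eq_zero_iff.mpr h)
  obtain ⟨y, hyJ, hy0⟩ : ∃ y ∈ J, y ≠ 0 := by
    by_contra h; push_neg at h; exact hJ (eq_zero_iff.mpr h)
  intro h
  exact mul_ne_zero hx0 hy0 (eq_zero_iff.mp h _ (mul_mem_mul hxI hyJ))

theorem fi_mul_le_mul {I J I' J' : F} (h1 : I ≤ I') (h2 : J ≤ J') : I * J ≤ I' * J' :=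
  le_trans (mul_le_mul_right h2 I)
    (by rw [mul_comm I J', mul_comm I' J']; exact mul_le_mul_right h1 J')

theorem fi_mul_le_one {I J : F} (hI : I ≤ 1) (hJ : J ≤ 1) : I * J ≤ 1 := by
  simpa using fi_mul_le_mul hI hJ

variable (s : StarOp D K)

theorem star_ne_zero {I : F} (hI : I ≠ 0) : s.star I ≠ 0 := fun h =>
  hI (le_antisymm (h ▸ s.le_star hI) (zero_le I))

theorem star_le_one {I : F} (h0 : I ≠ 0) (h : I ≤ 1) : s.star I ≤ 1 :=
  s.star_one ▸ s.star_mono h0 h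

theorem mul_star_le (C : F) {Y : F} (hY : Y ≠ 0) : C * s.star Y ≤ s.star (C * Y) := by
  rw [mul_le]
  intro c hc a ha
  by_cases hc0 : c = 0
  · have : (0 : K) ∈ s.star (C * Y) := zero_mem (s.star (C * Y)).coeToSubmodule
    simpa [hc0] using this
  · have hmem : c * a ∈ spanSingleton (nonZeroDivisors D) c * s.star Y :=
      mul_mem_mul (mem_spanSingleton_self _ c) ha
    rw [← s.star_smul c hc0 hY] at hmem
    refine s.star_mono (fi_mul_ne_zero (spanSingleton_ne_zero_iff.mpr hc0) hY) ?_ hmem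
    exact fi_mul_le_mul (spanSingleton_le_iff_mem.mpr hc) le_rfl

theorem star_mul_star_le {Y Z : F} (hY : Y ≠ 0) (hZ : Z ≠ 0) :
    s.star Y * s.star Z ≤ s.star (Y * Z) := by
  have h1 : s.star Y * s.star Z ≤ s.star (s.star Y * Z) := mul_star_le s (s.star Y) hZ
  have h2 : s.star Y * Z ≤ s.star (Y * Z) := by
    have := mul_star_le s Z hY
    rwa [mul_comm Z (s.star Y), mul_comm Z Y] at this
  refine h1.trans ?_
  have := s.star_mono (fi_mul_ne_zero (star_ne_zero s hY) hZ) h2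
  rwa [s.star_idem (fi_mul_ne_zero hY hZ)] at this

theorem star_le_vv {I : F} (hI : I ≠ 0) : s.star I ≤ (I⁻¹)⁻¹ := by
  have h1 : I⁻¹ * s.star I ≤ s.star (I⁻¹ * I) := mul_star_le s I⁻¹ hI
  have h2 : s.star (I⁻¹ * I) ≤ 1 :=
    star_le_one s (fi_mul_ne_zero (fi_inv_ne_zero hI) hI) fi_inv_mul_le_one
  rw [inv_eq (I := I⁻¹), le_div_iff_mul_le (fi_inv_ne_zero hI)]
  rw [mul_comm] at h1
  exact h1.trans h2

end StarVCICDAux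

open StarVCICDAux

/-- `D` is a `(∗,v)`-CICD iff `(AB)⁻¹ = (A⁻¹B⁻¹)^∗` for all nonzero fractional
ideals `A`, `B`. -/
theorem starVCICD_iff_inv_mul (s : StarOp D K) :
    (∀ A : FractionalIdeal (nonZeroDivisors D) K, A ≠ 0 → s.star ((A⁻¹)⁻¹ * A⁻¹) = 1) ↔
    (∀ A B : FractionalIdeal (nonZeroDivisors D) K, A ≠ 0 → B ≠ 0 → (A * B)⁻¹ = s.star (A⁻¹ * B⁻¹)) := by
  constructor
  · -- (∗,v)-CICD → inverse of product formula
    intro h A B hA hB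
    have hAi : A⁻¹ ≠ 0 := fi_inv_ne_zero hA
    have hBi : B⁻¹ ≠ 0 := fi_inv_ne_zero hB
    have hvA : (A⁻¹)⁻¹ ≠ 0 := fi_inv_ne_zero hAi
    have hvB : (B⁻¹)⁻¹ ≠ 0 := fi_inv_ne_zero hBi
    have hAB : A * B ≠ 0 := fi_mul_ne_zero hA hB
    have hABi : (A * B)⁻¹ ≠ 0 := fi_inv_ne_zero hAB
    have hiAiB : A⁻¹ * B⁻¹ ≠ 0 := fi_mul_ne_zero hAi hBi
    refine le_antisymm ?_ ?_
    · -- (A*B)⁻¹ ≤ star (A⁻¹ * B⁻¹)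
      have hsA := h A hA
      have hsB := h B hB
      -- step a : (A*B)⁻¹ * (A⁻¹)⁻¹ ≤ B⁻¹
      have stepa : (A * B)⁻¹ * (A⁻¹)⁻¹ ≤ B⁻¹ := by
        rw [inv_eq (I := B), le_div_iff_mul_le hB]
        have e1 : (A * B)⁻¹ * (A⁻¹)⁻¹ * B = (A⁻¹)⁻¹ * ((A * B)⁻¹ * B) := by ring
        have e2 : (A * B)⁻¹ * B ≤ A⁻¹ := by
          rw [inv_eq (I := A), le_div_iff_mul_le hA]
          have e3 : (A * B)⁻¹ * B * A = A * B * (A * B)⁻¹ := by ring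
          rw [e3]; exact fi_mul_inv_le_one
        rw [e1]
        exact (fi_mul_le_mul le_rfl e2).trans fi_inv_mul_le_one
      -- step b : (A*B)⁻¹ * (A⁻¹)⁻¹ * (B⁻¹)⁻¹ ≤ 1
      have stepb : (A * B)⁻¹ * (A⁻¹)⁻¹ * (B⁻¹)⁻¹ ≤ 1 := by
        have e1 : (A * B)⁻¹ * (A⁻¹)⁻¹ * (B⁻¹)⁻¹
            = (B⁻¹)⁻¹ * ((A * B)⁻¹ * (A⁻¹)⁻¹) := by ring
        rw [e1]
        exact (fi_mul_le_mul le_rfl stepa).trans fi_inv_mul_le_one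
      -- assemble
      have hWA : (A⁻¹)⁻¹ * A⁻¹ ≠ 0 := fi_mul_ne_zero hvA hAi
      have hWB : (B⁻¹)⁻¹ * B⁻¹ ≠ 0 := fi_mul_ne_zero hvB hBi
      have hU1 : (A * B)⁻¹ * ((A⁻¹)⁻¹ * A⁻¹) ≠ 0 := fi_mul_ne_zero hABi hWA
      have c1 : (A * B)⁻¹ = (A * B)⁻¹ * s.star ((A⁻¹)⁻¹ * A⁻¹) * s.star ((B⁻¹)⁻¹ * B⁻¹) := by
        rw [hsA, hsB, mul_one, mul_one]
      have c2 : (A * B)⁻¹ * s.star ((A⁻¹)⁻¹ * A⁻¹) * s.star ((B⁻¹)⁻¹ * B⁻¹)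
          ≤ s.star ((A * B)⁻¹ * ((A⁻¹)⁻¹ * A⁻¹)) * s.star ((B⁻¹)⁻¹ * B⁻¹) :=
        fi_mul_le_mul (mul_star_le s _ hWA) le_rfl
      have c3 : s.star ((A * B)⁻¹ * ((A⁻¹)⁻¹ * A⁻¹)) * s.star ((B⁻¹)⁻¹ * B⁻¹)
          ≤ s.star ((A * B)⁻¹ * ((A⁻¹)⁻¹ * A⁻¹) * ((B⁻¹)⁻¹ * B⁻¹)) :=
        star_mul_star_le s hU1 hWB
      have c4 : (A * B)⁻¹ * ((A⁻¹)⁻¹ * A⁻¹) * ((B⁻¹)⁻¹ * B⁻¹) ≤ A⁻¹ * B⁻¹ := by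
        have e1 : (A * B)⁻¹ * ((A⁻¹)⁻¹ * A⁻¹) * ((B⁻¹)⁻¹ * B⁻¹)
            = ((A * B)⁻¹ * (A⁻¹)⁻¹ * (B⁻¹)⁻¹) * (A⁻¹ * B⁻¹) := by ring
        rw [e1]
        have := fi_mul_le_mul stepb (le_refl (A⁻¹ * B⁻¹))
        rwa [one_mul] at this
      have c5 : s.star ((A * B)⁻¹ * ((A⁻¹)⁻¹ * A⁻¹) * ((B⁻¹)⁻¹ * B⁻¹))
          ≤ s.star (A⁻¹ * B⁻¹) :=
        s.star_mono (fi_mul_ne_zero hU1 hWB) c4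
      calc (A * B)⁻¹ = (A * B)⁻¹ * s.star ((A⁻¹)⁻¹ * A⁻¹) * s.star ((B⁻¹)⁻¹ * B⁻¹) := c1
        _ ≤ _ := c2
        _ ≤ _ := c3
        _ ≤ _ := c5
    · -- star (A⁻¹ * B⁻¹) ≤ (A*B)⁻¹
      have h1 : s.star (A⁻¹ * B⁻¹) ≤ ((A⁻¹ * B⁻¹)⁻¹)⁻¹ := star_le_vv s hiAiB
      have h2 : A * B ≤ (A⁻¹ * B⁻¹)⁻¹ := by
        rw [inv_eq, le_div_iff_mul_le hiAiB]
        have e1 : A * B * (A⁻¹ * B⁻¹) = (A * A⁻¹) * (B * B⁻¹) := by ring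
        rw [e1]
        exact fi_mul_le_one fi_mul_inv_le_one fi_mul_inv_le_one
      refine h1.trans ?_
      rw [inv_eq (I := A * B), le_div_iff_mul_le hAB]
      have h3 : ((A⁻¹ * B⁻¹)⁻¹)⁻¹ * (A * B) ≤ ((A⁻¹ * B⁻¹)⁻¹)⁻¹ * (A⁻¹ * B⁻¹)⁻¹ :=
        fi_mul_le_mul le_rfl h2
      exact h3.trans (by rw [mul_comm]; exact fi_mul_inv_le_one)
  · -- inverse of product formula → (∗,v)-CICD
    intro h A hA
    have hAi : A⁻¹ ≠ 0 := fi_inv_ne_zero hA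
    have hvA : (A⁻¹)⁻¹ ≠ 0 := fi_inv_ne_zero hAi
    have key : (A * A⁻¹)⁻¹ = s.star (A⁻¹ * (A⁻¹)⁻¹) := h A A⁻¹ hA hAi
    have e : s.star ((A⁻¹)⁻¹ * A⁻¹) = s.star (A⁻¹ * (A⁻¹)⁻¹) := by rw [mul_comm]
    rw [e, ← key]
    refine le_antisymm ?_ ?_
    · rw [key]
      exact star_le_one s (fi_mul_ne_zero hAi hvA) fi_mul_inv_le_one
    · have h1 : (1 : FractionalIdeal (nonZeroDivisors D) K)⁻¹ ≤ (A * A⁻¹)⁻¹ :=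
        inv_anti_mono (fi_mul_ne_zero hA hAi) one_ne_zero fi_mul_inv_le_one
      rwa [inv_eq, FractionalIdeal.div_one] at h1
end

section
/- An integral domain D is a (∗,v)-CICD if and only if (A^v : B) = (A^v B⁻¹)^∗ for all nonzero fractional ideals A, B of D. -/
open FractionalIdeal

variable {D K : Type*} [CommRing D] [IsDomain D] [Field K] [Algebra D K] [IsFractionRing D K]

lemma myInv_ne_zero {A : FractionalIdeal (nonZeroDivisors D) K} (hA : A ≠ 0) : A⁻¹ ≠ 0 := by
  intro h
  have := FractionalIdeal.bot_lt_mul_inv (I := A) hA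
  rw [h, mul_zero] at this
  exact this.ne rfl

lemma myMul_ne_zero {A B : FractionalIdeal (nonZeroDivisors D) K} (hA : A ≠ 0) (hB : B ≠ 0) :
    A * B ≠ 0 := by
  obtain ⟨a, haA, ha⟩ : ∃ a ∈ A, a ≠ (0 : K) := by
    by_contra h
    push_neg at h
    exact hA (FractionalIdeal.eq_zero_iff.mpr h)
  obtain ⟨b, hbB, hb⟩ : ∃ b ∈ B, b ≠ (0 : K) := by
    by_contra h
    push_neg at h
    exact hB (FractionalIdeal.eq_zero_iff.mpr h)
  intro h
  have : a * b ∈ A * B := FractionalIdeal.mul_mem_mul haA hbB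
  rw [h] at this
  exact mul_ne_zero ha hb (by simpa using this)

lemma myLe_inv_comm {A B : FractionalIdeal (nonZeroDivisors D) K} (hA : A ≠ 0) (hB : B ≠ 0) :
    A ≤ B⁻¹ ↔ B ≤ A⁻¹ := by
  rw [inv_eq, inv_eq, le_div_iff_mul_le hA, le_div_iff_mul_le hB, mul_comm]

lemma myMul_inv_le_one {A : FractionalIdeal (nonZeroDivisors D) K} : A * A⁻¹ ≤ 1 :=
  FractionalIdeal.mul_one_div_le_one

lemma my_vv_le {A : FractionalIdeal (nonZeroDivisors D) K} (hA : A ≠ 0) : A ≤ (A⁻¹)⁻¹ :=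
  (myLe_inv_comm hA (myInv_ne_zero hA)).mpr le_rfl

lemma my_inv_inv_inv {A : FractionalIdeal (nonZeroDivisors D) K} (hA : A ≠ 0) :
    ((A⁻¹)⁻¹)⁻¹ = A⁻¹ := by
  refine le_antisymm ?_ ?_
  · exact FractionalIdeal.inv_anti_mono hA ((myInv_ne_zero (myInv_ne_zero hA))) (my_vv_le hA)
  · exact my_vv_le (myInv_ne_zero hA)

/-- `D` is a `(∗,v)`-CICD iff `(A^v : B) = (A^v B⁻¹)^∗` for all nonzero
fractional ideals `A`, `B`. -/
theorem starVCICD_iff_v_colon (s : StarOp D K) :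
    (∀ A : FractionalIdeal (nonZeroDivisors D) K, A ≠ 0 → s.star ((A⁻¹)⁻¹ * A⁻¹) = 1) ↔
    (∀ A B : FractionalIdeal (nonZeroDivisors D) K, A ≠ 0 → B ≠ 0 → (A⁻¹)⁻¹ / B = s.star ((A⁻¹)⁻¹ * B⁻¹)) := by
  constructor
  · intro hC A B hA hB
    have hAi : A⁻¹ ≠ 0 := myInv_ne_zero hA
    have hvA : (A⁻¹)⁻¹ ≠ 0 := myInv_ne_zero hAi
    have hBi : B⁻¹ ≠ 0 := myInv_ne_zero hB
    have hvB : (B⁻¹)⁻¹ ≠ 0 := myInv_ne_zero hBi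
    have hI : (A⁻¹)⁻¹ * B⁻¹ ≠ 0 := myMul_ne_zero hvA hBi
    refine le_antisymm ?_ ?_
    · -- (A⁻¹)⁻¹ / B ≤ star I
      intro x hx
      by_cases hx0 : x = 0
      · subst hx0; exact FractionalIdeal.zero_mem _
      have h1 : spanSingleton (nonZeroDivisors D) x * B ≤ (A⁻¹)⁻¹ := by
        rw [inv_eq (I := A⁻¹), ← le_div_iff_mul_le hB, ← inv_eq]
        exact spanSingleton_le_iff_mem.mpr hx
      have h2 : spanSingleton (nonZeroDivisors D) x * A⁻¹ ≤ B⁻¹ := by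
        rw [inv_eq (I := B), le_div_iff_mul_le hB]
        have : spanSingleton (nonZeroDivisors D) x * B * A⁻¹ ≤ 1 := by
          rw [inv_eq (I := A⁻¹)] at h1
          exact (le_div_iff_mul_le hAi).mp h1
        calc spanSingleton (nonZeroDivisors D) x * A⁻¹ * B
            = spanSingleton (nonZeroDivisors D) x * B * A⁻¹ := by ring
          _ ≤ 1 := this
      have hxA : spanSingleton (nonZeroDivisors D) x * A⁻¹ ≠ 0 :=
        myMul_ne_zero (spanSingleton_ne_zero_iff.mpr hx0) hAi
      have h3 : (B⁻¹)⁻¹ ≤ (spanSingleton (nonZeroDivisors D) x * A⁻¹)⁻¹ :=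
        FractionalIdeal.inv_anti_mono hxA hBi h2
      have h4 : spanSingleton (nonZeroDivisors D) x * (B⁻¹)⁻¹ ≤ (A⁻¹)⁻¹ := by
        refine le_trans (mul_right_mono h3) ?_
        rw [inv_eq (I := A⁻¹), le_div_iff_mul_le hAi]
        calc spanSingleton (nonZeroDivisors D) x * (spanSingleton (nonZeroDivisors D) x * A⁻¹)⁻¹ * A⁻¹
            = (spanSingleton (nonZeroDivisors D) x * A⁻¹) *
                (spanSingleton (nonZeroDivisors D) x * A⁻¹)⁻¹ := by ring
          _ ≤ 1 := myMul_inv_le_one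
      have h5 : spanSingleton (nonZeroDivisors D) x * ((B⁻¹)⁻¹ * B⁻¹) ≤ (A⁻¹)⁻¹ * B⁻¹ := by
        rw [← mul_assoc]
        exact mul_left_mono h4
      have hJ : (B⁻¹)⁻¹ * B⁻¹ ≠ 0 := myMul_ne_zero hvB hBi
      have hcalc : spanSingleton (nonZeroDivisors D) x ≤ s.star ((A⁻¹)⁻¹ * B⁻¹) := by
        calc spanSingleton (nonZeroDivisors D) x
            = spanSingleton (nonZeroDivisors D) x * s.star ((B⁻¹)⁻¹ * B⁻¹) := by
              rw [hC B hB, mul_one]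
          _ = s.star (spanSingleton (nonZeroDivisors D) x * ((B⁻¹)⁻¹ * B⁻¹)) :=
              (s.star_smul x hx0 hJ).symm
          _ ≤ s.star ((A⁻¹)⁻¹ * B⁻¹) :=
              s.star_mono (myMul_ne_zero (spanSingleton_ne_zero_iff.mpr hx0) hJ) h5
      exact spanSingleton_le_iff_mem.mp hcalc
    · -- star I ≤ (A⁻¹)⁻¹ / B
      rw [le_div_iff_mul_le hB, inv_eq (I := A⁻¹), le_div_iff_mul_le hAi, mul_assoc, mul_comm]
      refine FractionalIdeal.mul_le.mpr fun h hh x hx => ?_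
      by_cases h0 : h = 0
      · subst h0; rw [zero_mul]; exact zero_mem _
      have hhle : spanSingleton (nonZeroDivisors D) h * ((A⁻¹)⁻¹ * B⁻¹) ≤ 1 := by
        refine le_trans (mul_left_mono (spanSingleton_le_iff_mem.mpr hh)) ?_
        calc B * A⁻¹ * ((A⁻¹)⁻¹ * B⁻¹)
            = (A⁻¹ * (A⁻¹)⁻¹) * (B * B⁻¹) := by ring
          _ ≤ 1 * (B * B⁻¹) := mul_left_mono myMul_inv_le_one
          _ = B * B⁻¹ := one_mul _
          _ ≤ 1 := myMul_inv_le_one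
      have hst : spanSingleton (nonZeroDivisors D) h * s.star ((A⁻¹)⁻¹ * B⁻¹) ≤ 1 := by
        rw [← s.star_smul h h0 hI, ← s.star_one]
        exact s.star_mono (myMul_ne_zero (spanSingleton_ne_zero_iff.mpr h0) hI) hhle
      exact hst (FractionalIdeal.mul_mem_mul (mem_spanSingleton_self _ _) hx)
  · intro H A hA
    have hAi : A⁻¹ ≠ 0 := myInv_ne_zero hA
    have hvA : (A⁻¹)⁻¹ ≠ 0 := myInv_ne_zero hAi
    have key := H A ((A⁻¹)⁻¹) hA hvA
    rw [my_inv_inv_inv hA] at key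
    refine le_antisymm ?_ ?_
    · have hle : (A⁻¹)⁻¹ * A⁻¹ ≤ 1 := by rw [mul_comm]; exact myMul_inv_le_one
      have := s.star_mono (myMul_ne_zero hvA hAi) hle
      rwa [s.star_one] at this
    · rw [← key, le_div_iff_mul_le hvA, one_mul]
end

section
/- An integral domain D is a ∗-Prüfer domain if and only if every nonzero ideal of D generated by two elements is ∗-invertible. -/
open FractionalIdeal

variable {D K : Type*} [CommRing D] [IsDomain D] [Field K] [Algebra D K] [IsFractionRing D K]

namespace StarAux

local notation "FI" => FractionalIdeal (nonZeroDivisors D) K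

lemma fi_mul_ne_zero {A B : FI} (hA : A ≠ 0) (hB : B ≠ 0) : A * B ≠ 0 := by
  have hA' : ¬ ∀ x ∈ A, x = (0 : K) := fun h => hA (eq_zero_iff.mpr h)
  have hB' : ¬ ∀ x ∈ B, x = (0 : K) := fun h => hB (eq_zero_iff.mpr h)
  push_neg at hA' hB'
  obtain ⟨a, haA, ha0⟩ := hA'
  obtain ⟨b, hbB, hb0⟩ := hB'
  intro h
  exact mul_ne_zero ha0 hb0 ((mem_zero_iff _).mp (h ▸ mul_mem_mul haA hbB))

lemma fi_mul_le_mul {A A' B B' : FI} (h1 : A ≤ A') (h2 : B ≤ B') : A * B ≤ A' * B' :=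
  mul_le.mpr fun _ hx _ hy => mul_mem_mul (h1 hx) (h2 hy)

lemma fi_le_add_left {A B : FI} : A ≤ A + B := by
  rw [← sup_eq_add]; exact le_sup_left

lemma fi_le_add_right {A B : FI} : B ≤ A + B := by
  rw [← sup_eq_add]; exact le_sup_right

lemma fi_add_le {A B C : FI} (h1 : A ≤ C) (h2 : B ≤ C) : A + B ≤ C := by
  rw [← sup_eq_add]; exact sup_le h1 h2

lemma fi_mul_inv_le_one (A : FI) : A * A⁻¹ ≤ 1 := by
  rw [inv_eq]; exact mul_one_div_le_one

lemma fi_inv_ne_zero {A : FI} (hA : A ≠ 0) : A⁻¹ ≠ 0 := by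
  obtain ⟨d, hd, hint⟩ := A.isFractional
  have hβ : algebraMap D K d ≠ 0 :=
    IsFractionRing.to_map_ne_zero_of_mem_nonZeroDivisors hd
  have h1 : spanSingleton (nonZeroDivisors D) (algebraMap D K d) ≤ A⁻¹ := by
    rw [spanSingleton_le_iff_mem, inv_eq, mem_div_iff_of_ne_zero hA]
    intro y hy
    obtain ⟨c, hc⟩ := hint y hy
    refine (mem_one_iff _).mpr ⟨c, ?_⟩
    rw [hc, Algebra.smul_def]
  intro h0
  rw [h0, FractionalIdeal.le_zero_iff, spanSingleton_eq_zero_iff] at h1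
  exact hβ h1

/-- The crucial three-ideal identity. -/
lemma key_identity (A B C : FI) :
    (A + B) * (B + C) * (C + A) = (A + B + C) * (A * B + B * C + C * A) := by
  have h1 : A * B * C ≤ (A + B) * (B + C) * (C + A) :=
    fi_mul_le_mul (fi_mul_le_mul fi_le_add_left fi_le_add_left) fi_le_add_left
  have habs : ∀ {X Y : FI}, Y ≤ X → X + Y = X := by
    intro X Y h; rw [← sup_eq_add]; exact sup_eq_left.mpr h
  calc (A + B) * (B + C) * (C + A)
      = (A + B) * (B + C) * (C + A) + A * B * C := (habs h1).symm
    _ = (A + B + C) * (A * B + B * C + C * A) := by ring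

section star

variable (s : StarOp D K)

lemma star_ne_zero {A : FI} (hA : A ≠ 0) : s.star A ≠ 0 := fun h0 =>
  hA (FractionalIdeal.le_zero_iff.mp (h0 ▸ s.le_star hA))

lemma star_mul_le {A B : FI} (hA : A ≠ 0) : s.star A * B ≤ s.star (A * B) := by
  refine mul_le.mpr fun x hx y hy => ?_
  by_cases hy0 : y = 0
  · rw [hy0, mul_zero]; exact zero_mem _
  · have h1 : spanSingleton (nonZeroDivisors D) y * A ≤ A * B := by
      rw [mul_comm]
      exact fi_mul_le_mul le_rfl (spanSingleton_le_iff_mem.mpr hy)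
    have h2 := s.star_smul (A := A) y hy0 hA
    have h3 : spanSingleton (nonZeroDivisors D) y * s.star A ≤ s.star (A * B) := by
      rw [← h2]
      exact s.star_mono (fi_mul_ne_zero (spanSingleton_ne_zero_iff.mpr hy0) hA) h1
    have h4 : x * y ∈ spanSingleton (nonZeroDivisors D) y * s.star A := by
      rw [mul_comm x y]
      exact mul_mem_mul (mem_spanSingleton_self _ y) hx
    exact h3 h4

lemma star_star_mul {X Y : FI} (hX : X ≠ 0) (hY : Y ≠ 0) :
    s.star (s.star X * Y) = s.star (X * Y) := by
  refine le_antisymm ?_ ?_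
  · have hne : s.star X * Y ≠ 0 := fi_mul_ne_zero (star_ne_zero s hX) hY
    calc s.star (s.star X * Y) ≤ s.star (s.star (X * Y)) :=
          s.star_mono hne (star_mul_le s hX)
      _ = s.star (X * Y) := s.star_idem (fi_mul_ne_zero hX hY)
  · exact s.star_mono (fi_mul_ne_zero hX hY) (fi_mul_le_mul (s.le_star hX) le_rfl)

/-- `∗`-invertibility. -/
def SInv (A : FI) : Prop := s.star (A * A⁻¹) = 1

lemma sinv_spanSingleton {x : K} (hx : x ≠ 0) :
    SInv s (spanSingleton (nonZeroDivisors D) x) := by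
  unfold SInv
  rw [spanSingleton_mul_inv K hx, s.star_one]

lemma sinv_mul {A B : FI} (hA : A ≠ 0) (hB : B ≠ 0) (iA : SInv s A) (iB : SInv s B) :
    SInv s (A * B) := by
  have hAB : A * B ≠ 0 := fi_mul_ne_zero hA hB
  have hAi := fi_inv_ne_zero hA
  have hBi := fi_inv_ne_zero hB
  have hABi := fi_inv_ne_zero hAB
  have nAA : A * A⁻¹ ≠ 0 := fi_mul_ne_zero hA hAi
  have nBB : B * B⁻¹ ≠ 0 := fi_mul_ne_zero hB hBi
  have h1 : A⁻¹ * B⁻¹ ≤ (A * B)⁻¹ := by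
    rw [show (A * B)⁻¹ = 1 / (A * B) from rfl, le_div_iff_mul_le hAB]
    have he : A⁻¹ * B⁻¹ * (A * B) = (A * A⁻¹) * (B * B⁻¹) := by ring
    rw [he]
    calc (A * A⁻¹) * (B * B⁻¹) ≤ 1 * 1 :=
          fi_mul_le_mul (fi_mul_inv_le_one A) (fi_mul_inv_le_one B)
      _ = 1 := one_mul 1
  have h2 : (A * A⁻¹) * (B * B⁻¹) ≤ (A * B) * (A * B)⁻¹ := by
    have he : (A * A⁻¹) * (B * B⁻¹) = (A * B) * (A⁻¹ * B⁻¹) := by ring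
    rw [he]
    exact fi_mul_le_mul le_rfl h1
  have hlow : (1 : FI) ≤ s.star ((A * B) * (A * B)⁻¹) := by
    have hc : s.star ((A * A⁻¹) * (B * B⁻¹)) = 1 := by
      rw [← star_star_mul s nAA nBB, iA, one_mul, iB]
    rw [← hc]
    exact s.star_mono (fi_mul_ne_zero nAA nBB) h2
  have hup : s.star ((A * B) * (A * B)⁻¹) ≤ 1 := by
    have := s.star_mono (fi_mul_ne_zero hAB hABi) (fi_mul_inv_le_one (A * B))
    rwa [s.star_one] at this
  exact le_antisymm hup hlow

lemma sinv_of_mul {A B : FI} (hA : A ≠ 0) (hB : B ≠ 0) (i : SInv s (A * B)) :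
    SInv s A := by
  have hAB : A * B ≠ 0 := fi_mul_ne_zero hA hB
  have hABi := fi_inv_ne_zero hAB
  have hAi := fi_inv_ne_zero hA
  have h1 : B * (A * B)⁻¹ ≤ A⁻¹ := by
    rw [show A⁻¹ = 1 / A from rfl, le_div_iff_mul_le hA]
    have he : B * (A * B)⁻¹ * A = (A * B) * (A * B)⁻¹ := by ring
    rw [he]
    exact fi_mul_inv_le_one (A * B)
  have h2 : (A * B) * (A * B)⁻¹ ≤ A * A⁻¹ := by
    have he : (A * B) * (A * B)⁻¹ = A * (B * (A * B)⁻¹) := by ring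
    rw [he]
    exact fi_mul_le_mul le_rfl h1
  have hlow : (1 : FI) ≤ s.star (A * A⁻¹) := by
    rw [← i]
    exact s.star_mono (fi_mul_ne_zero hAB hABi) h2
  have hup : s.star (A * A⁻¹) ≤ 1 := by
    have := s.star_mono (fi_mul_ne_zero hA hAi) (fi_mul_inv_le_one A)
    rwa [s.star_one] at this
  exact le_antisymm hup hlow

end star

/-- The fractional ideal generated by a list of elements of `K`. -/
def spanList : List K → FractionalIdeal (nonZeroDivisors D) K
  | [] => 0
  | x :: t => spanSingleton (nonZeroDivisors D) x + spanList t

lemma coe_spanList (l : List K) :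
    (spanList (D := D) l : Submodule D K) = Submodule.span D {x | x ∈ l} := by
  induction l with
  | nil => simp [spanList]
  | cons x t ih =>
    have hset : {y | y ∈ x :: t} = insert x {y | y ∈ t} := by
      ext y; simp [List.mem_cons]
    rw [spanList, coe_add, coe_spanSingleton, ih, hset, Submodule.span_insert,
      Submodule.add_eq_sup]

section twoGen

variable (s : StarOp D K)

/-- Two-generated ∗-invertibility for elements of `K`, from the integral hypothesis. -/
lemma sinv_two (h2 : ∀ a b : D,
      spanSingleton (nonZeroDivisors D) (algebraMap D K a) +
        spanSingleton (nonZeroDivisors D) (algebraMap D K b) ≠ 0 →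
      s.star ((spanSingleton (nonZeroDivisors D) (algebraMap D K a) +
          spanSingleton (nonZeroDivisors D) (algebraMap D K b)) *
        (spanSingleton (nonZeroDivisors D) (algebraMap D K a) +
          spanSingleton (nonZeroDivisors D) (algebraMap D K b))⁻¹) = 1)
    (x y : K)
    (hxy : spanSingleton (nonZeroDivisors D) x + spanSingleton (nonZeroDivisors D) y ≠ 0) :
    SInv s (spanSingleton (nonZeroDivisors D) x + spanSingleton (nonZeroDivisors D) y) := by
  obtain ⟨b, hb⟩ := IsLocalization.exist_integer_multiples_of_finite (nonZeroDivisors D)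
    (![x, y] : Fin 2 → K)
  obtain ⟨a₀, ha₀⟩ := hb 0
  obtain ⟨a₁, ha₁⟩ := hb 1
  simp only [Matrix.cons_val_zero, Matrix.cons_val_one, Matrix.head_cons] at ha₀ ha₁
  set β := algebraMap D K (b : D) with hβdef
  have hβ : β ≠ 0 := IsFractionRing.to_map_ne_zero_of_mem_nonZeroDivisors b.2
  set F := spanSingleton (nonZeroDivisors D) x + spanSingleton (nonZeroDivisors D) y with hF
  have hkey : spanSingleton (nonZeroDivisors D) β * F =
      spanSingleton (nonZeroDivisors D) (algebraMap D K a₀) +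
        spanSingleton (nonZeroDivisors D) (algebraMap D K a₁) := by
    rw [hF, mul_add, spanSingleton_mul_spanSingleton, spanSingleton_mul_spanSingleton,
      ha₀, ha₁]
    norm_num [Algebra.smul_def]
    rfl
  have hβS : spanSingleton (nonZeroDivisors D) β ≠ 0 := spanSingleton_ne_zero_iff.mpr hβ
  have hβF : spanSingleton (nonZeroDivisors D) β * F ≠ 0 := fi_mul_ne_zero hβS hxy
  have hinv : SInv s (spanSingleton (nonZeroDivisors D) β * F) := by
    rw [hkey]; exact h2 a₀ a₁ (hkey ▸ hβF)
  have hβinv : SInv s (spanSingleton (nonZeroDivisors D) β⁻¹) :=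
    sinv_spanSingleton s (inv_ne_zero hβ)
  have hmul := sinv_mul s (spanSingleton_ne_zero_iff.mpr (inv_ne_zero hβ)) hβF hβinv hinv
  have hF2 : spanSingleton (nonZeroDivisors D) β⁻¹ *
      (spanSingleton (nonZeroDivisors D) β * F) = F := by
    rw [← mul_assoc, spanSingleton_mul_spanSingleton, inv_mul_cancel₀ hβ, spanSingleton_one,
      one_mul]
  rwa [hF2] at hmul

lemma sinv_spanList (h2 : ∀ a b : D,
      spanSingleton (nonZeroDivisors D) (algebraMap D K a) +
        spanSingleton (nonZeroDivisors D) (algebraMap D K b) ≠ 0 →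
      s.star ((spanSingleton (nonZeroDivisors D) (algebraMap D K a) +
          spanSingleton (nonZeroDivisors D) (algebraMap D K b)) *
        (spanSingleton (nonZeroDivisors D) (algebraMap D K a) +
          spanSingleton (nonZeroDivisors D) (algebraMap D K b))⁻¹) = 1) :
    ∀ n (l : List K), l.length ≤ n → spanList (D := D) l ≠ 0 → SInv s (spanList (D := D) l) := by
  intro n
  induction n with
  | zero =>
    intro l hl h0
    rw [Nat.le_zero, List.length_eq_zero_iff] at hl
    subst hl
    exact absurd rfl h0
  | succ n ih =>
    intro l hl h0
    match l with
    | [] => exact absurd rfl h0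
    | [x] =>
      have hx : spanList (D := D) [x] =
          spanSingleton (nonZeroDivisors D) x + spanSingleton (nonZeroDivisors D) 0 := by
        simp [spanList]
      rw [hx]
      apply sinv_two s h2
      rw [← hx]; exact h0
    | x :: y :: t =>
      set A := spanSingleton (nonZeroDivisors D) x with hA
      set B := spanSingleton (nonZeroDivisors D) y with hB
      set C := spanList (D := D) t with hC
      have hlF : spanList (D := D) (x :: y :: t) = A + (B + C) := rfl
      have hlyt : spanList (D := D) (y :: t) = B + C := rfl
      have hlxt : spanList (D := D) (x :: t) = A + C := rfl
      have hlen_t : t.length ≤ n := by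
        simp only [List.length_cons] at hl; omega
      have hlen_yt : (y :: t).length ≤ n := by
        simp only [List.length_cons] at hl ⊢; omega
      have hlen_xt : (x :: t).length ≤ n := by
        simp only [List.length_cons] at hl ⊢; omega
      by_cases hC0 : C = 0
      · -- F = A + B, two generated
        have hF : spanList (D := D) (x :: y :: t) = A + B := by
          rw [hlF, hC0, add_zero]
        rw [hF]
        exact sinv_two s h2 x y (hF ▸ h0)
      · by_cases hAB0 : A + B = 0
        · -- x = y = 0, F = C
          have hF : spanList (D := D) (x :: y :: t) = C := by
            rw [hlF, ← add_assoc, hAB0, zero_add]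
          rw [hF]
          exact ih t hlen_t hC0
        · -- main case
          have hBC0 : B + C ≠ 0 := fun h => hC0 (by
            rw [← FractionalIdeal.le_zero_iff, ← h]; exact fi_le_add_right)
          have hCA0 : C + A ≠ 0 := fun h => hC0 (by
            rw [← FractionalIdeal.le_zero_iff, ← h]; exact fi_le_add_left)
          have iAB : SInv s (A + B) := sinv_two s h2 x y hAB0
          have iBC : SInv s (B + C) := by
            rw [← hlyt]; exact ih (y :: t) hlen_yt (hlyt ▸ hBC0)
          have iCA : SInv s (C + A) := by
            rw [add_comm, ← hlxt]
            have := ih (x :: t) hlen_xt (hlxt ▸ (by rw [add_comm] at hCA0; exact hCA0))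
            exact this
          have iP : SInv s ((A + B) * (B + C) * (C + A)) :=
            sinv_mul s (fi_mul_ne_zero hAB0 hBC0) hCA0
              (sinv_mul s hAB0 hBC0 iAB iBC) iCA
          have hFne : A + B + C ≠ 0 := fun h => hC0 (by
            rw [← FractionalIdeal.le_zero_iff, ← h]; exact fi_le_add_right)
          have hW : A * B + B * C + C * A ≠ 0 := by
            intro h
            have hxy0 : A ≠ 0 ∨ B ≠ 0 := by
              by_contra hcon
              push_neg at hcon
              exact hAB0 (by rw [hcon.1, hcon.2, add_zero])
            have h' : A * B + B * C + C * A ≤ 0 := FractionalIdeal.le_zero_iff.mpr h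
            rcases hxy0 with hA0 | hB0
            · exact fi_mul_ne_zero hC0 hA0
                (FractionalIdeal.le_zero_iff.mp (le_trans fi_le_add_right h'))
            · exact fi_mul_ne_zero hB0 hC0
                (FractionalIdeal.le_zero_iff.mp
                  (le_trans (le_trans fi_le_add_right fi_le_add_left) h'))
          have iF : SInv s (A + B + C) := by
            apply sinv_of_mul s hFne hW
            rw [← key_identity]
            exact iP
          rw [hlF, ← add_assoc]
          exact iF

end twoGen

end StarAux

open StarAux in
/-- `D` is a `∗`-Prüfer domain iff every nonzero ideal of `D` generated by two
elements is `∗`-invertible. -/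
theorem starPrufer_iff_twoGenerated_invertible (s : StarOp D K) :
    (∀ F : FractionalIdeal (nonZeroDivisors D) K, F ≠ 0 → (F : Submodule D K).FG → s.star (F * F⁻¹) = 1) ↔
    (∀ a b : D,
      spanSingleton (nonZeroDivisors D) (algebraMap D K a) +
        spanSingleton (nonZeroDivisors D) (algebraMap D K b) ≠ 0 →
      s.star ((spanSingleton (nonZeroDivisors D) (algebraMap D K a) +
          spanSingleton (nonZeroDivisors D) (algebraMap D K b)) *
        (spanSingleton (nonZeroDivisors D) (algebraMap D K a) +
          spanSingleton (nonZeroDivisors D) (algebraMap D K b))⁻¹) = 1) := by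
  constructor
  · intro h a b hab
    apply h _ hab
    rw [coe_add, coe_spanSingleton, coe_spanSingleton, Submodule.add_eq_sup]
    exact Submodule.FG.sup (Submodule.fg_span_singleton _) (Submodule.fg_span_singleton _)
  · intro h2 F hF hFG
    obtain ⟨T, hT⟩ := hFG
    have hset : {x | x ∈ T.toList} = (T : Set K) := by
      ext z; simp
    have hFl : F = spanList (D := D) T.toList := by
      apply coeToSubmodule_injective
      show (F : Submodule D K) = (spanList (D := D) T.toList : Submodule D K)
      rw [coe_spanList, hset, hT]
    have hmain := sinv_spanList s h2 T.toList.length T.toList le_rfl (hFl ▸ hF)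
    rw [hFl]
    exact hmain
end

section
/- An integral domain D is a ∗-Prüfer domain if and only if ((A ∩ B)(A + B))^∗ = (AB)^∗ for all nonzero fractional ideals A and B of D. -/
open FractionalIdeal

variable {D K : Type*} [CommRing D] [IsDomain D] [Field K] [Algebra D K] [IsFractionRing D K]

section Aux

variable {A B C E F : FractionalIdeal (nonZeroDivisors D) K}

lemma aux_exists_mem_ne_zero (hA : A ≠ 0) : ∃ x ∈ A, x ≠ 0 := by
  by_contra h
  push_neg at h
  exact hA (eq_zero_iff.mpr h)

lemma aux_mul_ne_zero (hA : A ≠ 0) (hB : B ≠ 0) : A * B ≠ 0 := by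
  obtain ⟨a, haA, ha⟩ := aux_exists_mem_ne_zero hA
  obtain ⟨b, hbB, hb⟩ := aux_exists_mem_ne_zero hB
  intro h
  have hmem : a * b ∈ A * B := mul_mem_mul haA hbB
  rw [h, mem_zero_iff] at hmem
  exact mul_ne_zero ha hb hmem

lemma aux_mem_inf {x : K} : x ∈ A ⊓ B ↔ x ∈ A ∧ x ∈ B := by
  rw [← mem_coe, coe_inf, Submodule.mem_inf, mem_coe, mem_coe]

lemma aux_inf_ne_zero (hA : A ≠ 0) (hB : B ≠ 0) : A ⊓ B ≠ 0 := by
  obtain ⟨a, haA, ha⟩ := aux_exists_mem_ne_zero hA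
  obtain ⟨b, hbB, hb⟩ := aux_exists_mem_ne_zero hB
  obtain ⟨⟨p1, q1⟩, hq1⟩ := IsLocalization.surj (nonZeroDivisors D) a
  obtain ⟨⟨p2, q2⟩, hq2⟩ := IsLocalization.surj (nonZeroDivisors D) b
  simp only at hq1 hq2
  have hp1 : algebraMap D K p1 ≠ 0 := by
    rw [← hq1]
    exact mul_ne_zero ha (IsFractionRing.to_map_ne_zero_of_mem_nonZeroDivisors q1.2)
  have hp2 : algebraMap D K p2 ≠ 0 := by
    rw [← hq2]
    exact mul_ne_zero hb (IsFractionRing.to_map_ne_zero_of_mem_nonZeroDivisors q2.2)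
  have key1 : ((q1 : D) * p2) • a = algebraMap D K p1 * algebraMap D K p2 := by
    rw [Algebra.smul_def, _root_.map_mul, ← hq1]; ring
  have key2 : ((q2 : D) * p1) • b = algebraMap D K p1 * algebraMap D K p2 := by
    rw [Algebra.smul_def, _root_.map_mul, ← hq2]; ring
  have hmA : algebraMap D K p1 * algebraMap D K p2 ∈ A := by
    rw [← key1, ← mem_coe]
    exact Submodule.smul_mem _ _ (mem_coe.mpr haA)
  have hmB : algebraMap D K p1 * algebraMap D K p2 ∈ B := by
    rw [← key2, ← mem_coe]
    exact Submodule.smul_mem _ _ (mem_coe.mpr hbB)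
  intro h
  have hmem : algebraMap D K p1 * algebraMap D K p2 ∈ A ⊓ B := aux_mem_inf.mpr ⟨hmA, hmB⟩
  rw [h, mem_zero_iff] at hmem
  exact mul_ne_zero hp1 hp2 hmem

lemma aux_inv_ne_zero (hA : A ≠ 0) : A⁻¹ ≠ 0 := by
  obtain ⟨d, hdS, hd⟩ := A.isFractional
  have hmem : algebraMap D K d ∈ A⁻¹ := by
    rw [mem_inv_iff hA]
    intro y hy
    obtain ⟨r, hr⟩ := hd y (mem_coe.mpr hy)
    exact (mem_one_iff _).mpr ⟨r, by rw [hr, Algebra.smul_def]⟩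
  intro h
  rw [h, mem_zero_iff] at hmem
  exact IsFractionRing.to_map_ne_zero_of_mem_nonZeroDivisors hdS hmem

lemma aux_mul_le_mul (h1 : A ≤ C) (h2 : B ≤ E) : A * B ≤ C * E :=
  mul_le.mpr fun x hx y hy => mul_mem_mul (h1 hx) (h2 hy)

lemma aux_mul_inv_le_one (hA : A ≠ 0) : A * A⁻¹ ≤ 1 :=
  mul_le.mpr fun x hx y hy => by
    have h := (mem_inv_iff hA).mp hy x hx
    rwa [mul_comm] at h

lemma aux_ne_zero_of_le (hA : A ≠ 0) (h : A ≤ B) : B ≠ 0 := fun h0 => hA (FractionalIdeal.le_zero_iff.mp (h0 ▸ h))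

lemma aux_le_add_left : A ≤ A + B := by rw [← sup_eq_add]; exact le_sup_left

lemma aux_star_spanSingleton (s : StarOp D K) {x : K} (hx : x ≠ 0) :
    s.star (spanSingleton (nonZeroDivisors D) x) = spanSingleton (nonZeroDivisors D) x := by
  have h := s.star_smul (A := 1) x hx one_ne_zero
  rwa [mul_one, s.star_one, mul_one] at h

lemma aux_star_ne_zero (s : StarOp D K) (hA : A ≠ 0) : s.star A ≠ 0 :=
  aux_ne_zero_of_le hA (s.le_star hA)

lemma aux_star_mul_star (s : StarOp D K) (hA : A ≠ 0) (hB : B ≠ 0) :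
    s.star (s.star A * B) = s.star (A * B) := by
  have hAB : A * B ≠ 0 := aux_mul_ne_zero hA hB
  have h1 : A * B ≤ s.star A * B := aux_mul_le_mul (s.le_star hA) le_rfl
  have hsAB : s.star A * B ≠ 0 := aux_ne_zero_of_le hAB h1
  have h2 : s.star A * B ≤ s.star (A * B) := by
    rw [mul_le]
    intro x hx y hy
    by_cases hy0 : y = 0
    · subst hy0
      rw [mul_zero, ← mem_coe]
      exact Submodule.zero_mem _
    have hyB : spanSingleton (nonZeroDivisors D) y ≤ B := spanSingleton_le_iff_mem.mpr hy
    have hsA : spanSingleton (nonZeroDivisors D) y * A ≠ 0 :=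
      aux_mul_ne_zero (spanSingleton_ne_zero_iff.mpr hy0) hA
    have hmem : x * y ∈ spanSingleton (nonZeroDivisors D) y * s.star A := by
      rw [mul_comm x y]
      exact mul_mem_mul (mem_spanSingleton_self _ y) hx
    rw [← s.star_smul y hy0 hA] at hmem
    have hle : spanSingleton (nonZeroDivisors D) y * A ≤ A * B := by
      rw [mul_comm]
      exact aux_mul_le_mul le_rfl hyB
    exact s.star_mono hsA hle hmem
  refine le_antisymm ?_ (s.star_mono hAB h1)
  have h3 := s.star_mono hsAB h2
  rwa [s.star_idem hAB] at h3

lemma aux_inv_add (hA : A ≠ 0) (hB : B ≠ 0) : (A + B)⁻¹ = A⁻¹ ⊓ B⁻¹ := by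
  have hAB : A + B ≠ 0 := aux_ne_zero_of_le hA aux_le_add_left
  apply le_antisymm
  · intro x hx
    replace hx : x ∈ (A + B)⁻¹ := hx
    show x ∈ A⁻¹ ⊓ B⁻¹
    rw [mem_inv_iff hAB] at hx
    refine aux_mem_inf.mpr ⟨(mem_inv_iff hA).mpr fun y hy => hx y (aux_le_add_left hy), ?_⟩
    refine (mem_inv_iff hB).mpr fun y hy => hx y ?_
    rw [add_comm]
    exact aux_le_add_left hy
  · intro x hx
    replace hx : x ∈ A⁻¹ ⊓ B⁻¹ := hx
    show x ∈ (A + B)⁻¹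
    obtain ⟨hxA, hxB⟩ := aux_mem_inf.mp hx
    rw [mem_inv_iff hAB]
    intro y hy
    obtain ⟨i, hi, j, hj, rfl⟩ := (mem_add A B y).mp hy
    rw [mul_add, ← mem_coe]
    exact Submodule.add_mem _ (mem_coe.mpr ((mem_inv_iff hA).mp hxA i hi))
      (mem_coe.mpr ((mem_inv_iff hB).mp hxB j hj))

lemma aux_spanSingleton_mul_inf {x : K} (hx : x ≠ 0) :
    spanSingleton (nonZeroDivisors D) x * (A ⊓ B) =
      (spanSingleton (nonZeroDivisors D) x * A) ⊓ (spanSingleton (nonZeroDivisors D) x * B) := by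
  apply le_antisymm
  · rw [le_inf_iff]
    exact ⟨aux_mul_le_mul le_rfl inf_le_left, aux_mul_le_mul le_rfl inf_le_right⟩
  · intro y hy
    replace hy : y ∈ spanSingleton (nonZeroDivisors D) x * A ⊓ spanSingleton (nonZeroDivisors D) x * B := hy
    show y ∈ spanSingleton (nonZeroDivisors D) x * (A ⊓ B)
    obtain ⟨h1, h2⟩ := aux_mem_inf.mp hy
    obtain ⟨w, hwA, hw⟩ := mem_singleton_mul.mp h1
    obtain ⟨w', hwB, hw'⟩ := mem_singleton_mul.mp h2
    have hww : w = w' := mul_left_cancel₀ hx (hw.symm.trans hw')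
    exact mem_singleton_mul.mpr ⟨w, aux_mem_inf.mpr ⟨hwA, hww ▸ hwB⟩, hw⟩

lemma aux_principal_inf {a b : K} (ha : a ≠ 0) (hb : b ≠ 0) :
    spanSingleton (nonZeroDivisors D) a ⊓ spanSingleton (nonZeroDivisors D) b =
      spanSingleton (nonZeroDivisors D) (a * b) *
        (spanSingleton (nonZeroDivisors D) a + spanSingleton (nonZeroDivisors D) b)⁻¹ := by
  rw [aux_inv_add (spanSingleton_ne_zero_iff.mpr ha) (spanSingleton_ne_zero_iff.mpr hb),
    spanSingleton_inv, spanSingleton_inv, aux_spanSingleton_mul_inf (mul_ne_zero ha hb),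
    spanSingleton_mul_spanSingleton, spanSingleton_mul_spanSingleton]
  have e1 : a * b * a⁻¹ = b := by field_simp
  have e2 : a * b * b⁻¹ = a := by field_simp
  rw [e1, e2, inf_comm]

lemma aux_principal_key (s : StarOp D K) {a b : K} (ha : a ≠ 0) (hb : b ≠ 0) :
    s.star ((spanSingleton (nonZeroDivisors D) a ⊓ spanSingleton (nonZeroDivisors D) b) *
        (spanSingleton (nonZeroDivisors D) a + spanSingleton (nonZeroDivisors D) b)) =
      spanSingleton (nonZeroDivisors D) (a * b) *
        s.star ((spanSingleton (nonZeroDivisors D) a + spanSingleton (nonZeroDivisors D) b) *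
          (spanSingleton (nonZeroDivisors D) a + spanSingleton (nonZeroDivisors D) b)⁻¹) := by
  have hFne : spanSingleton (nonZeroDivisors D) a + spanSingleton (nonZeroDivisors D) b ≠ 0 :=
    aux_ne_zero_of_le (spanSingleton_ne_zero_iff.mpr ha) aux_le_add_left
  have hFinv := aux_inv_ne_zero hFne
  set F := spanSingleton (nonZeroDivisors D) a + spanSingleton (nonZeroDivisors D) b with hFdef
  have e : spanSingleton (nonZeroDivisors D) (a * b) * F⁻¹ * F =
      spanSingleton (nonZeroDivisors D) (a * b) * (F * F⁻¹) := by ring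
  rw [aux_principal_inf ha hb, ← hFdef, e,
    s.star_smul (a * b) (mul_ne_zero ha hb) (aux_mul_ne_zero hFne hFinv)]

end Aux

/-- `D` is a `∗`-Prüfer domain iff `((A ∩ B)(A + B))^∗ = (AB)^∗` for all nonzero
fractional ideals `A`, `B`. -/
theorem starPrufer_iff_inf_sup_mul (s : StarOp D K) :
    (∀ F : FractionalIdeal (nonZeroDivisors D) K, F ≠ 0 → (F : Submodule D K).FG → s.star (F * F⁻¹) = 1) ↔
    (∀ A B : FractionalIdeal (nonZeroDivisors D) K, A ≠ 0 → B ≠ 0 →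
      s.star ((A ⊓ B) * (A + B)) = s.star (A * B)) := by
  constructor
  · intro h A B hA hB
    have hApB : A + B ≠ 0 := aux_ne_zero_of_le hA aux_le_add_left
    have hinf : A ⊓ B ≠ 0 := aux_inf_ne_zero hA hB
    have hprod : (A ⊓ B) * (A + B) ≠ 0 := aux_mul_ne_zero hinf hApB
    have hAB : A * B ≠ 0 := aux_mul_ne_zero hA hB
    have hle : (A ⊓ B) * (A + B) ≤ A * B := by
      rw [mul_add, ← sup_eq_add]
      apply sup_le
      · calc (A ⊓ B) * A ≤ B * A := aux_mul_le_mul inf_le_right le_rfl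
          _ = A * B := mul_comm _ _
      · exact aux_mul_le_mul inf_le_left le_rfl
    refine le_antisymm (s.star_mono hprod hle) ?_
    have hABle : A * B ≤ s.star ((A ⊓ B) * (A + B)) := by
      rw [mul_le]
      intro a haA b hbB
      by_cases ha : a = 0
      · subst ha
        rw [zero_mul, ← mem_coe]
        exact Submodule.zero_mem _
      by_cases hb : b = 0
      · subst hb
        rw [mul_zero, ← mem_coe]
        exact Submodule.zero_mem _
      have hFne : spanSingleton (nonZeroDivisors D) a + spanSingleton (nonZeroDivisors D) b ≠ 0 :=
        aux_ne_zero_of_le (spanSingleton_ne_zero_iff.mpr ha) aux_le_add_left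
      have hFfg : ((spanSingleton (nonZeroDivisors D) a + spanSingleton (nonZeroDivisors D) b :
          FractionalIdeal (nonZeroDivisors D) K) : Submodule D K).FG := by
        rw [coe_add, coe_spanSingleton, coe_spanSingleton, Submodule.add_eq_sup]
        exact (Submodule.fg_span_singleton a).sup (Submodule.fg_span_singleton b)
      have h1 := h _ hFne hFfg
      have h2 := aux_principal_key s (D := D) (K := K) ha hb
      rw [h1, mul_one] at h2
      have hmem : a * b ∈ s.star ((spanSingleton (nonZeroDivisors D) a ⊓
          spanSingleton (nonZeroDivisors D) b) *
          (spanSingleton (nonZeroDivisors D) a + spanSingleton (nonZeroDivisors D) b)) := by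
        rw [h2]
        exact mem_spanSingleton_self _ _
      have hsmallne : (spanSingleton (nonZeroDivisors D) a ⊓ spanSingleton (nonZeroDivisors D) b) *
          (spanSingleton (nonZeroDivisors D) a + spanSingleton (nonZeroDivisors D) b) ≠ 0 :=
        aux_mul_ne_zero (aux_inf_ne_zero (spanSingleton_ne_zero_iff.mpr ha)
          (spanSingleton_ne_zero_iff.mpr hb)) hFne
      have hsmallle : (spanSingleton (nonZeroDivisors D) a ⊓ spanSingleton (nonZeroDivisors D) b) *
          (spanSingleton (nonZeroDivisors D) a + spanSingleton (nonZeroDivisors D) b) ≤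
          (A ⊓ B) * (A + B) := by
        apply aux_mul_le_mul
        · exact inf_le_inf (spanSingleton_le_iff_mem.mpr haA) (spanSingleton_le_iff_mem.mpr hbB)
        · rw [← sup_eq_add, ← sup_eq_add]
          exact sup_le_sup (spanSingleton_le_iff_mem.mpr haA) (spanSingleton_le_iff_mem.mpr hbB)
      exact s.star_mono hsmallne hsmallle hmem
    have h3 := s.star_mono hAB hABle
    rwa [s.star_idem hprod] at h3
  · intro h F hF hFG
    classical
    have main : ∀ (t : Finset K) (F : FractionalIdeal (nonZeroDivisors D) K), F ≠ 0 →
        Submodule.span D (t : Set K) = (F : Submodule D K) → s.star (F * F⁻¹) = 1 := by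
      intro t
      induction t using Finset.induction_on with
      | empty =>
        intro F hF ht
        rw [Finset.coe_empty, Submodule.span_empty] at ht
        exact absurd (coeToSubmodule_eq_bot.mp ht.symm) hF
      | @insert a t hat IH =>
        intro F hF ht
        have hspan : Submodule.span D ((t : Finset K) : Set K) ≤ (F : Submodule D K) := by
          rw [← ht]
          exact Submodule.span_mono (by simp)
        set J : FractionalIdeal (nonZeroDivisors D) K :=
          ⟨Submodule.span D ((t : Finset K) : Set K), isFractional_of_le hspan⟩ with hJdef
        have hJcoe : (J : Submodule D K) = Submodule.span D ((t : Finset K) : Set K) := rfl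
        have hFJK : F = spanSingleton (nonZeroDivisors D) a + J := by
          apply coeToSubmodule_injective
          show (F : Submodule D K) =
            ((spanSingleton (nonZeroDivisors D) a + J : FractionalIdeal (nonZeroDivisors D) K) :
              Submodule D K)
          rw [coe_add, coe_spanSingleton, hJcoe, Submodule.add_eq_sup, ← ht, Finset.coe_insert,
            Submodule.span_insert]
        by_cases hJ : J = 0
        · have hFa : F = spanSingleton (nonZeroDivisors D) a := by rw [hFJK, hJ, add_zero]
          have ha : a ≠ 0 := by
            rintro rfl
            rw [hFa, spanSingleton_zero] at hF
            exact hF rfl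
          rw [hFa, spanSingleton_inv, spanSingleton_mul_spanSingleton, mul_inv_cancel₀ ha,
            spanSingleton_one, s.star_one]
        by_cases ha : a = 0
        · have hFJ : F = J := by rw [hFJK, ha, spanSingleton_zero, zero_add]
          rw [hFJ]
          exact IH J (hFJ ▸ hF) rfl
        set C := spanSingleton (nonZeroDivisors D) a with hCdef
        have hC : C ≠ 0 := spanSingleton_ne_zero_iff.mpr ha
        have hIH : s.star (J * J⁻¹) = 1 := IH J hJ rfl
        have hKK : s.star (C * C⁻¹) = 1 := by
          rw [hCdef, spanSingleton_inv, spanSingleton_mul_spanSingleton, mul_inv_cancel₀ ha,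
            spanSingleton_one, s.star_one]
        have hJinv : J⁻¹ ≠ 0 := aux_inv_ne_zero hJ
        have hCinv : C⁻¹ ≠ 0 := aux_inv_ne_zero hC
        have hFC : F = J + C := by rw [hFJK, add_comm]
        have hinf : J ⊓ C ≠ 0 := aux_inf_ne_zero hJ hC
        have hh := h J C hJ hC
        set X := (J ⊓ C) * J⁻¹ * C⁻¹ with hXdef
        have hXne : X ≠ 0 := aux_mul_ne_zero (aux_mul_ne_zero hinf hJinv) hCinv
        have hXle : X ≤ F⁻¹ := by
          rw [inv_eq, le_div_iff_mul_le hF]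
          have e : X * F = (J * J⁻¹) * ((J ⊓ C) * C⁻¹) + (C * C⁻¹) * ((J ⊓ C) * J⁻¹) := by
            rw [hFC, hXdef, mul_add]; ring
          rw [e, ← sup_eq_add]
          apply sup_le
          · calc (J * J⁻¹) * ((J ⊓ C) * C⁻¹) ≤ 1 * (C * C⁻¹) :=
                aux_mul_le_mul (aux_mul_inv_le_one hJ) (aux_mul_le_mul inf_le_right le_rfl)
              _ = C * C⁻¹ := one_mul _
              _ ≤ 1 := aux_mul_inv_le_one hC
          · calc (C * C⁻¹) * ((J ⊓ C) * J⁻¹) ≤ 1 * (J * J⁻¹) :=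
                aux_mul_le_mul (aux_mul_inv_le_one hC) (aux_mul_le_mul inf_le_left le_rfl)
              _ = J * J⁻¹ := one_mul _
              _ ≤ 1 := aux_mul_inv_le_one hJ
        have hstar : s.star (F * X) = 1 := by
          have hFinf : F * (J ⊓ C) ≠ 0 := aux_mul_ne_zero hF hinf
          have hJCinv : J⁻¹ * C⁻¹ ≠ 0 := aux_mul_ne_zero hJinv hCinv
          have e1 : F * X = (F * (J ⊓ C)) * (J⁻¹ * C⁻¹) := by rw [hXdef]; ring
          rw [e1, ← aux_star_mul_star s hFinf hJCinv]
          have e2 : F * (J ⊓ C) = (J ⊓ C) * (J + C) := by rw [hFC]; ring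
          rw [e2, hh, aux_star_mul_star s (aux_mul_ne_zero hJ hC) hJCinv]
          have e3 : J * C * (J⁻¹ * C⁻¹) = (J * J⁻¹) * (C * C⁻¹) := by ring
          rw [e3, ← aux_star_mul_star s (aux_mul_ne_zero hJ hJinv) (aux_mul_ne_zero hC hCinv),
            hIH, one_mul, hKK]
        have hFF : F * F⁻¹ ≠ 0 := aux_mul_ne_zero hF (aux_inv_ne_zero hF)
        have le1 : (1 : FractionalIdeal (nonZeroDivisors D) K) ≤ s.star (F * F⁻¹) := by
          rw [← hstar]
          exact s.star_mono (aux_mul_ne_zero hF hXne) (aux_mul_le_mul le_rfl hXle)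
        have le2 : s.star (F * F⁻¹) ≤ 1 := by
          have h4 := s.star_mono hFF (aux_mul_inv_le_one hF)
          rwa [s.star_one] at h4
        exact le_antisymm le2 le1
    obtain ⟨t, ht⟩ := hFG
    exact main t F hF ht
end

section
/- An integral domain D is a ∗-Prüfer domain if and only if (((a) :_D (b)) + ((b) :_D (a)))^∗ = D for all nonzero a, b ∈ D. -/
open FractionalIdeal

variable {D K : Type*} [CommRing D] [IsDomain D] [Field K] [Algebra D K] [IsFractionRing D K]

set_option linter.unusedSectionVars false

namespace StarPruferAux

lemma mul_ne_zero' {A B : FractionalIdeal (nonZeroDivisors D) K} (hA : A ≠ 0) (hB : B ≠ 0) :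
    A * B ≠ 0 := by
  obtain ⟨a, haA, ha⟩ : ∃ a ∈ A, a ≠ (0:K) := by
    by_contra h; push_neg at h; exact hA (FractionalIdeal.eq_zero_iff.mpr h)
  obtain ⟨b, hbB, hb⟩ : ∃ b ∈ B, b ≠ (0:K) := by
    by_contra h; push_neg at h; exact hB (FractionalIdeal.eq_zero_iff.mpr h)
  intro h
  exact mul_ne_zero ha hb (FractionalIdeal.eq_zero_iff.mp h _ (mul_mem_mul haA hbB))

lemma add_self' (A : FractionalIdeal (nonZeroDivisors D) K) : A + A = A := by
  rw [← FractionalIdeal.sup_eq_add, sup_idem]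

lemma key_identity (A B C : FractionalIdeal (nonZeroDivisors D) K) :
    (A+B)*((B+C)*(C+A)) = (A+B+C)*(A*B+(B*C+C*A)) := by
  have h2 : ∀ X : FractionalIdeal (nonZeroDivisors D) K, X * 2 = X := fun X => by
    rw [mul_two, add_self']
  have h3 : ∀ X : FractionalIdeal (nonZeroDivisors D) K, X * 3 = X := fun X => by
    have : (3 : FractionalIdeal (nonZeroDivisors D) K) = 2 + 1 := by norm_num
    rw [this, mul_add, h2, mul_one, add_self']
  ring_nf
  rw [h2, h3]

lemma inv_ne_zero' {A : FractionalIdeal (nonZeroDivisors D) K} (hA : A ≠ 0) : A⁻¹ ≠ 0 := by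
  have hd : spanSingleton (nonZeroDivisors D) (algebraMap D K A.den) ≤ A⁻¹ := by
    rw [inv_eq, le_div_iff_mul_le hA, den_mul_self_eq_num']
    exact coeIdeal_le_one
  intro h
  rw [h, FractionalIdeal.le_zero_iff, spanSingleton_eq_zero_iff] at hd
  exact nonZeroDivisors.coe_ne_zero A.den
    ((IsFractionRing.to_map_eq_zero_iff (K := K)).mp hd)

lemma coe_finset_sum (S : Finset K) :
    ((∑ x ∈ S, spanSingleton (nonZeroDivisors D) x :
        FractionalIdeal (nonZeroDivisors D) K) : Submodule D K)
      = Submodule.span D (↑S : Set K) := by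
  classical
  induction S using Finset.induction with
  | empty => simp
  | insert _ _ hx ih =>
      rw [Finset.sum_insert hx, coe_add, ih, Finset.coe_insert, Submodule.span_insert,
        coe_spanSingleton]
      exact Submodule.add_eq_sup _ _

variable (s : StarOp D K)

lemma star_ne_zero {A : FractionalIdeal (nonZeroDivisors D) K} (hA : A ≠ 0) : s.star A ≠ 0 := by
  intro h
  exact hA (FractionalIdeal.le_zero_iff.mp (h ▸ s.le_star hA))

lemma star_mul_star_left {A B : FractionalIdeal (nonZeroDivisors D) K} (hA : A ≠ 0) (hB : B ≠ 0) :
    s.star (s.star A * B) = s.star (A * B) := by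
  have hAB : A * B ≠ 0 := mul_ne_zero' hA hB
  apply le_antisymm
  · have h1 : s.star A * B ≤ s.star (A * B) := by
      rw [FractionalIdeal.mul_le]
      intro x hx y hy
      by_cases hy0 : y = 0
      · rw [hy0, mul_zero]; exact zero_mem _
      · have h2 : x * y ∈ spanSingleton (nonZeroDivisors D) y * s.star A := by
          rw [mul_comm]
          exact mul_mem_mul hx ((mem_spanSingleton _).mpr ⟨1, one_smul _ _⟩)
        rw [← s.star_smul y hy0 hA] at h2
        refine s.star_mono ?_ ?_ h2
        · exact mul_ne_zero' (spanSingleton_ne_zero_iff.mpr hy0) hA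
        · rw [mul_comm A B]
          exact mul_left_mono (spanSingleton_le_iff_mem.mpr hy)
    calc s.star (s.star A * B) ≤ s.star (s.star (A * B)) :=
          s.star_mono (mul_ne_zero' (star_ne_zero s hA) hB) h1
      _ = s.star (A * B) := s.star_idem hAB
  · exact s.star_mono hAB (mul_left_mono (s.le_star hA))

/-- `A` is ∗-invertible. -/
def SInv (A : FractionalIdeal (nonZeroDivisors D) K) : Prop := s.star (A * A⁻¹) = 1

lemma star_eq_one_of_between {X Y : FractionalIdeal (nonZeroDivisors D) K} (hX : X ≠ 0)
    (hsX : s.star X = 1) (hXY : X ≤ Y) (hY1 : Y ≤ 1) : s.star Y = 1 := by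
  refine le_antisymm ?_ ?_
  · calc s.star Y ≤ s.star 1 :=
        s.star_mono (fun h => hX (FractionalIdeal.le_zero_iff.mp (h ▸ hXY))) hY1
      _ = 1 := s.star_one
  · exact hsX ▸ s.star_mono hX hXY

lemma sinv_mul {A B : FractionalIdeal (nonZeroDivisors D) K} (hA : A ≠ 0) (hB : B ≠ 0)
    (ha : SInv s A) (hb : SInv s B) : SInv s (A * B) := by
  have hAB : A * B ≠ 0 := mul_ne_zero' hA hB
  have hAi : A⁻¹ ≠ 0 := inv_ne_zero' hA
  have hBi : B⁻¹ ≠ 0 := inv_ne_zero' hB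
  have hle : A⁻¹ * B⁻¹ ≤ (A * B)⁻¹ := by
    rw [inv_eq (I := A * B), le_div_iff_mul_le hAB]
    calc A⁻¹ * B⁻¹ * (A * B) = (A * A⁻¹) * (B * B⁻¹) := by ring
      _ ≤ 1 * 1 := le_trans
            (mul_left_mono (inv_eq (I := A) ▸ mul_one_div_le_one))
            (mul_right_mono (inv_eq (I := B) ▸ mul_one_div_le_one))
      _ = 1 := one_mul 1
  have hXne : A * B * (A⁻¹ * B⁻¹) ≠ 0 := mul_ne_zero' hAB (mul_ne_zero' hAi hBi)
  have hstar : s.star (A * B * (A⁻¹ * B⁻¹)) = 1 := by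
    have he : A * B * (A⁻¹ * B⁻¹) = (A * A⁻¹) * (B * B⁻¹) := by ring
    rw [he, ← star_mul_star_left s (mul_ne_zero' hA hAi) (mul_ne_zero' hB hBi), ha, one_mul, hb]
  refine star_eq_one_of_between s hXne hstar (mul_right_mono hle) ?_
  rw [inv_eq]; exact mul_one_div_le_one

lemma sinv_of_mul_left {A B : FractionalIdeal (nonZeroDivisors D) K} (hA : A ≠ 0) (hB : B ≠ 0)
    (h : SInv s (A * B)) : SInv s A := by
  have hAB : A * B ≠ 0 := mul_ne_zero' hA hB
  have hle : B * (A * B)⁻¹ ≤ A⁻¹ := by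
    rw [inv_eq (I := A), le_div_iff_mul_le hA]
    calc B * (A * B)⁻¹ * A = (A * B) * (A * B)⁻¹ := by ring
      _ ≤ 1 := inv_eq (I := A*B) ▸ mul_one_div_le_one
  have hXne : A * B * (A * B)⁻¹ ≠ 0 := mul_ne_zero' hAB (inv_ne_zero' hAB)
  refine star_eq_one_of_between s hXne h ?_ ?_
  · calc A * B * (A * B)⁻¹ = A * (B * (A * B)⁻¹) := by ring
      _ ≤ A * A⁻¹ := mul_right_mono hle
  · rw [inv_eq]; exact mul_one_div_le_one

lemma smul_mul_smul_inv {F : FractionalIdeal (nonZeroDivisors D) K} (hF : F ≠ 0) {x : K}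
    (hx : x ≠ 0) :
    (spanSingleton (nonZeroDivisors D) x * F) * (spanSingleton (nonZeroDivisors D) x * F)⁻¹
      = F * F⁻¹ := by
  set G := spanSingleton (nonZeroDivisors D) x * F with hGdef
  have hxs : spanSingleton (nonZeroDivisors D) x ≠ 0 := spanSingleton_ne_zero_iff.mpr hx
  have hG : G ≠ 0 := mul_ne_zero' hxs hF
  have hGinv : G⁻¹ = spanSingleton (nonZeroDivisors D) x⁻¹ * F⁻¹ := by
    apply le_antisymm
    · have h1 : spanSingleton (nonZeroDivisors D) x * G⁻¹ ≤ F⁻¹ := by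
        rw [inv_eq (I := F), le_div_iff_mul_le hF]
        calc spanSingleton (nonZeroDivisors D) x * G⁻¹ * F = G * G⁻¹ := by
              rw [hGdef]; ring
          _ ≤ 1 := inv_eq (I := G) ▸ mul_one_div_le_one
      calc G⁻¹ = spanSingleton (nonZeroDivisors D) x⁻¹ *
            (spanSingleton (nonZeroDivisors D) x * G⁻¹) := by
            rw [← mul_assoc, spanSingleton_mul_spanSingleton, inv_mul_cancel₀ hx,
              spanSingleton_one, one_mul]
        _ ≤ spanSingleton (nonZeroDivisors D) x⁻¹ * F⁻¹ := mul_right_mono h1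
    · rw [inv_eq (I := G), le_div_iff_mul_le hG]
      calc spanSingleton (nonZeroDivisors D) x⁻¹ * F⁻¹ * G
            = (spanSingleton (nonZeroDivisors D) x⁻¹ * spanSingleton (nonZeroDivisors D) x) *
              (F * F⁻¹) := by rw [hGdef]; ring
        _ = F * F⁻¹ := by
            rw [spanSingleton_mul_spanSingleton, inv_mul_cancel₀ hx, spanSingleton_one, one_mul]
        _ ≤ 1 := inv_eq (I := F) ▸ mul_one_div_le_one
  rw [hGinv, hGdef]
  calc spanSingleton (nonZeroDivisors D) x * F *
        (spanSingleton (nonZeroDivisors D) x⁻¹ * F⁻¹)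
      = (spanSingleton (nonZeroDivisors D) x * spanSingleton (nonZeroDivisors D) x⁻¹) *
        (F * F⁻¹) := by ring
    _ = F * F⁻¹ := by
        rw [spanSingleton_mul_spanSingleton, mul_inv_cancel₀ hx, spanSingleton_one, one_mul]

lemma colon_le_mul_inv (c d : D) (hc : c ≠ 0) (hd : d ≠ 0) :
    (((Ideal.span {c} : Ideal D).colon (Ideal.span {d}) : Ideal D) :
        FractionalIdeal (nonZeroDivisors D) K) ≤
      (spanSingleton (nonZeroDivisors D) (algebraMap D K c) +
        spanSingleton (nonZeroDivisors D) (algebraMap D K d)) *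
      (spanSingleton (nonZeroDivisors D) (algebraMap D K c) +
        spanSingleton (nonZeroDivisors D) (algebraMap D K d))⁻¹ := by
  set c' := algebraMap D K c with hc'def
  set d' := algebraMap D K d with hd'def
  have hc' : c' ≠ 0 := (map_ne_zero_iff _ (IsFractionRing.injective D K)).mpr hc
  set F := spanSingleton (nonZeroDivisors D) c' + spanSingleton (nonZeroDivisors D) d' with hFdef
  have hcF : spanSingleton (nonZeroDivisors D) c' ≤ F := by
    rw [hFdef, ← FractionalIdeal.sup_eq_add]; exact le_sup_left
  have hF : F ≠ 0 := by
    intro h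
    rw [h, FractionalIdeal.le_zero_iff, spanSingleton_eq_zero_iff] at hcF
    exact hc' hcF
  intro z hz
  obtain ⟨u, hu, rfl⟩ := (mem_coeIdeal _).mp hz
  obtain ⟨e, he⟩ := Ideal.mem_span_singleton'.mp (Ideal.mem_colon_span_singleton.mp hu)
  set y := algebraMap D K u * c'⁻¹ with hydef
  have hyc : y * c' = algebraMap D K u := by
    rw [hydef, mul_assoc, inv_mul_cancel₀ hc', mul_one]
  have hyd : y * d' = algebraMap D K e := by
    have h1 : algebraMap D K u * d' = algebraMap D K e * c' := by
      rw [hc'def, hd'def, ← _root_.map_mul, ← _root_.map_mul, ← he]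
    rw [hydef, mul_comm _ c'⁻¹, mul_assoc, h1, mul_comm (algebraMap D K e) c', ← mul_assoc,
      inv_mul_cancel₀ hc', one_mul]
  have hy : y ∈ F⁻¹ := by
    have hspan : spanSingleton (nonZeroDivisors D) y ≤ F⁻¹ := by
      rw [inv_eq (I := F), le_div_iff_mul_le hF, hFdef, mul_add,
        spanSingleton_mul_spanSingleton, spanSingleton_mul_spanSingleton, hyc, hyd,
        ← FractionalIdeal.sup_eq_add]
      refine sup_le ?_ ?_ <;>
        exact spanSingleton_le_iff_mem.mpr ((mem_one_iff _).mpr ⟨_, rfl⟩)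
    exact hspan (mem_spanSingleton_self _ _)
  have : (c' : K) * y ∈ F * F⁻¹ := mul_mem_mul (hcF (mem_spanSingleton_self _ _)) hy
  rwa [mul_comm c' y, hyc] at this

lemma coe_colon_sum (a b : D) (ha : a ≠ 0) (hb : b ≠ 0) :
    ((((Ideal.span {a} : Ideal D).colon (Ideal.span {b}) +
        (Ideal.span {b} : Ideal D).colon (Ideal.span {a}) : Ideal D)) :
        FractionalIdeal (nonZeroDivisors D) K)
      = (spanSingleton (nonZeroDivisors D) (algebraMap D K a) +
          spanSingleton (nonZeroDivisors D) (algebraMap D K b)) *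
        (spanSingleton (nonZeroDivisors D) (algebraMap D K a) +
          spanSingleton (nonZeroDivisors D) (algebraMap D K b))⁻¹ := by
  set a' := algebraMap D K a with ha'def
  set b' := algebraMap D K b with hb'def
  have ha' : a' ≠ 0 := (map_ne_zero_iff _ (IsFractionRing.injective D K)).mpr ha
  have hb' : b' ≠ 0 := (map_ne_zero_iff _ (IsFractionRing.injective D K)).mpr hb
  set F := spanSingleton (nonZeroDivisors D) a' + spanSingleton (nonZeroDivisors D) b' with hFdef
  have haF : spanSingleton (nonZeroDivisors D) a' ≤ F := by
    rw [hFdef, ← FractionalIdeal.sup_eq_add]; exact le_sup_left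
  have hF : F ≠ 0 := by
    intro h
    rw [h, FractionalIdeal.le_zero_iff, spanSingleton_eq_zero_iff] at haF
    exact ha' haF
  apply le_antisymm
  · rw [Submodule.add_eq_sup, coeIdeal_sup]
    rw [← FractionalIdeal.sup_eq_add]
    refine sup_le ?_ ?_
    · exact colon_le_mul_inv a b ha hb
    · have := colon_le_mul_inv (K := K) b a hb ha
      rwa [show spanSingleton (nonZeroDivisors D) (algebraMap D K b) +
          spanSingleton (nonZeroDivisors D) (algebraMap D K a) = F by
        rw [hFdef]; exact add_comm _ _] at this
  · rw [FractionalIdeal.mul_le]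
    intro z hz y hy
    have hzmem : z ∈ Submodule.span D ({a', b'} : Set K) := by
      have : (F : Submodule D K) = Submodule.span D ({a', b'} : Set K) := by
        rw [hFdef, coe_add, coe_spanSingleton, coe_spanSingleton, Submodule.add_eq_sup,
          ← Submodule.span_union, Set.singleton_union]
      exact this ▸ hz
    obtain ⟨u, v, huv⟩ := Submodule.mem_span_pair.mp hzmem
    obtain ⟨cc, hcc⟩ := (mem_one_iff _).mp
      ((mem_inv_iff hF).mp hy a' (haF (mem_spanSingleton_self _ _)))
    have hbF : spanSingleton (nonZeroDivisors D) b' ≤ F := by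
      rw [hFdef, ← FractionalIdeal.sup_eq_add]; exact le_sup_right
    obtain ⟨ee, hee⟩ := (mem_one_iff _).mp
      ((mem_inv_iff hF).mp hy b' (hbF (mem_spanSingleton_self _ _)))
    have hkey : algebraMap D K (cc * b) = algebraMap D K (ee * a) := by
      rw [_root_.map_mul, _root_.map_mul, ← ha'def, ← hb'def, hcc, hee]
      ring
    have hcb : cc * b = ee * a := IsFractionRing.injective D K hkey
    have hccJ : cc ∈ (Ideal.span {a} : Ideal D).colon (Ideal.span {b}) :=
      Ideal.mem_colon_span_singleton.mpr (Ideal.mem_span_singleton'.mpr ⟨ee, hcb.symm⟩)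
    have heeJ : ee ∈ (Ideal.span {b} : Ideal D).colon (Ideal.span {a}) :=
      Ideal.mem_colon_span_singleton.mpr (Ideal.mem_span_singleton'.mpr ⟨cc, hcb⟩)
    refine (mem_coeIdeal _).mpr ⟨u * cc + v * ee, ?_, ?_⟩
    · exact Ideal.add_mem _ (Ideal.mul_mem_left _ _ (Ideal.mem_sup_left hccJ))
        (Ideal.mul_mem_left _ _ (Ideal.mem_sup_right heeJ))
    · rw [_root_.map_add, _root_.map_mul, _root_.map_mul, hcc, hee, ← huv]
      push_cast
      rw [add_mul, Algebra.smul_def, Algebra.smul_def]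
      ring

lemma sinv_singleton {x : K} (hx : x ≠ 0) :
    SInv s (spanSingleton (nonZeroDivisors D) x) := by
  unfold SInv
  rw [spanSingleton_inv, spanSingleton_mul_spanSingleton, mul_inv_cancel₀ hx, spanSingleton_one]
  exact s.star_one

lemma add_ne_zero_left {A : FractionalIdeal (nonZeroDivisors D) K} (hA : A ≠ 0)
    (B : FractionalIdeal (nonZeroDivisors D) K) : A + B ≠ 0 := by
  have hle : A ≤ A + B := by rw [← FractionalIdeal.sup_eq_add]; exact le_sup_left
  intro h
  exact hA (FractionalIdeal.le_zero_iff.mp (h ▸ hle))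

lemma sum_span_ne_zero {S : Finset K} (hne : S.Nonempty) (hS : ∀ x ∈ S, x ≠ 0) :
    (∑ x ∈ S, spanSingleton (nonZeroDivisors D) x) ≠ 0 := by
  obtain ⟨x, hx⟩ := hne
  intro h
  have hcoe := coe_finset_sum (D := D) S
  rw [h, coe_zero] at hcoe
  have hx0 : x ∈ Submodule.span D (↑S : Set K) := Submodule.subset_span hx
  rw [← hcoe] at hx0
  exact hS x hx ((Submodule.mem_bot D).mp hx0)

lemma sinv_finset (h2 : ∀ x y : K, x ≠ 0 → y ≠ 0 →
      SInv s (spanSingleton (nonZeroDivisors D) x + spanSingleton (nonZeroDivisors D) y)) :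
    ∀ (n : ℕ) (S : Finset K), S.card ≤ n → S.Nonempty → (∀ x ∈ S, x ≠ 0) →
      SInv s (∑ x ∈ S, spanSingleton (nonZeroDivisors D) x) := by
  intro n
  induction n with
  | zero =>
      intro S hcard hne _
      exfalso
      have := Finset.card_pos.mpr hne
      omega
  | succ n ih =>
      intro S hcard hne hS
      classical
      by_cases hc : S.card ≤ n
      · exact ih S hc hne hS
      have hcard' : S.card = n + 1 := le_antisymm hcard (by omega)
      rcases Nat.lt_or_ge S.card 3 with hlt | hge
      · -- card 1 or 2
        rcases Nat.lt_or_ge S.card 2 with hlt1 | hge2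
        · -- card 1
          have h1 : S.card = 1 := by
            have := Finset.card_pos.mpr hne; omega
          obtain ⟨x, rfl⟩ := Finset.card_eq_one.mp h1
          rw [Finset.sum_singleton]
          exact sinv_singleton s (hS x (Finset.mem_singleton_self x))
        · have h1 : S.card = 2 := by omega
          obtain ⟨x, y, hxy, rfl⟩ := Finset.card_eq_two.mp h1
          rw [Finset.sum_pair hxy]
          exact h2 x y (hS x (by simp)) (hS y (by simp))
      · -- card ≥ 3
        obtain ⟨x, hxS⟩ := hne
        have hye : (S.erase x).Nonempty := by
          rw [← Finset.card_pos, Finset.card_erase_of_mem hxS]; omega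
        obtain ⟨y, hyE⟩ := hye
        have hyS : y ∈ S := Finset.mem_of_mem_erase hyE
        set T := (S.erase x).erase y with hTdef
        have hyT : y ∉ T := Finset.notMem_erase _ _
        have hxT : x ∉ insert y T := by
          intro h
          rcases Finset.mem_insert.mp h with h | h
          · exact (Finset.ne_of_mem_erase hyE) h.symm
          · exact Finset.notMem_erase _ _ (Finset.mem_of_mem_erase h)
        have hSins : S = insert x (insert y T) := by
          rw [hTdef, Finset.insert_erase hyE, Finset.insert_erase hxS]
        have hTcard : T.card = n - 1 := by
          rw [hTdef, Finset.card_erase_of_mem hyE, Finset.card_erase_of_mem hxS, hcard']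
          omega
        have hTne : T.Nonempty := by
          rw [← Finset.card_pos, hTcard]; omega
        have hTsub : ∀ z ∈ T, z ∈ S := fun z hz =>
          Finset.mem_of_mem_erase (Finset.mem_of_mem_erase hz)
        set A := ∑ z ∈ T, spanSingleton (nonZeroDivisors D) z with hAdef
        set B := spanSingleton (nonZeroDivisors D) x with hBdef
        set C := spanSingleton (nonZeroDivisors D) y with hCdef
        have hx0 : x ≠ 0 := hS x hxS
        have hy0 : y ≠ 0 := hS y hyS
        have hA : A ≠ 0 := sum_span_ne_zero hTne (fun z hz => hS z (hTsub z hz))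
        have hB : B ≠ 0 := spanSingleton_ne_zero_iff.mpr hx0
        have hC : C ≠ 0 := spanSingleton_ne_zero_iff.mpr hy0
        have hsum : ∑ z ∈ S, spanSingleton (nonZeroDivisors D) z = A + B + C := by
          rw [hSins, Finset.sum_insert hxT, Finset.sum_insert hyT, ← hAdef, ← hBdef, ← hCdef]
          ring
        -- SInv of the three two-or-fewer-generated pieces
        have hAB : SInv s (A + B) := by
          have : A + B = ∑ z ∈ insert x T, spanSingleton (nonZeroDivisors D) z := by
            rw [Finset.sum_insert (fun h => hxT (Finset.mem_insert_of_mem h)), hAdef, hBdef]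
            ring
          rw [this]
          refine ih _ ?_ ⟨x, Finset.mem_insert_self _ _⟩ ?_
          · rw [Finset.card_insert_of_notMem (fun h => hxT (Finset.mem_insert_of_mem h)), hTcard]
            omega
          · intro z hz
            rcases Finset.mem_insert.mp hz with h | h
            · exact h ▸ hx0
            · exact hS z (hTsub z h)
        have hCA : SInv s (C + A) := by
          have : C + A = ∑ z ∈ insert y T, spanSingleton (nonZeroDivisors D) z := by
            rw [Finset.sum_insert hyT, hAdef, hCdef]
          rw [this]
          refine ih _ ?_ ⟨y, Finset.mem_insert_self _ _⟩ ?_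
          · rw [Finset.card_insert_of_notMem hyT, hTcard]; omega
          · intro z hz
            rcases Finset.mem_insert.mp hz with h | h
            · exact h ▸ hy0
            · exact hS z (hTsub z h)
        have hBC : SInv s (B + C) := h2 x y hx0 hy0
        have hABne : A + B ≠ 0 := add_ne_zero_left hA B
        have hBCne : B + C ≠ 0 := add_ne_zero_left hB C
        have hCAne : C + A ≠ 0 := add_ne_zero_left hC A
        have hprod : SInv s ((A + B) * ((B + C) * (C + A))) :=
          sinv_mul s hABne (mul_ne_zero' hBCne hCAne) hAB
            (sinv_mul s hBCne hCAne hBC hCA)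
        rw [key_identity] at hprod
        have hXne : A * B + (B * C + C * A) ≠ 0 := by
          have hle : B * C ≤ A * B + (B * C + C * A) := by
            rw [← FractionalIdeal.sup_eq_add, ← FractionalIdeal.sup_eq_add]
            exact le_trans le_sup_left le_sup_right
          intro h
          rw [h] at hle
          exact mul_ne_zero' hB hC (FractionalIdeal.le_zero_iff.mp hle)
        have hFne : A + B + C ≠ 0 := add_ne_zero_left hABne C
        rw [hsum]
        exact sinv_of_mul_left s hFne hXne hprod

end StarPruferAux

open StarPruferAux in
/-- `D` is a `∗`-Prüfer domain iff `(((a) :_D (b)) + ((b) :_D (a)))^∗ = D` for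
all nonzero `a`, `b` in `D`. -/
theorem starPrufer_iff_colon_sum (s : StarOp D K) :
    (∀ F : FractionalIdeal (nonZeroDivisors D) K, F ≠ 0 → (F : Submodule D K).FG → s.star (F * F⁻¹) = 1) ↔
    (∀ a b : D, a ≠ 0 → b ≠ 0 →
      s.star (↑((Ideal.span {a} : Ideal D).colon (Ideal.span {b}) +
        (Ideal.span {b} : Ideal D).colon (Ideal.span {a}))) = 1) := by
  constructor
  · intro H a b ha hb
    rw [coe_colon_sum a b ha hb]
    have ha' : algebraMap D K a ≠ 0 := (map_ne_zero_iff _ (IsFractionRing.injective D K)).mpr ha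
    refine H _ (add_ne_zero_left (spanSingleton_ne_zero_iff.mpr ha') _) ?_
    rw [coe_add, coe_spanSingleton, coe_spanSingleton, Submodule.add_eq_sup,
      ← Submodule.span_union, Set.singleton_union]
    exact Submodule.fg_span (Set.toFinite _)
  · intro H F hF hFG
    have h2 : ∀ x y : K, x ≠ 0 → y ≠ 0 →
        SInv s (spanSingleton (nonZeroDivisors D) x + spanSingleton (nonZeroDivisors D) y) := by
      intro x y hx hy
      obtain ⟨a, b, hbmem, hab⟩ := IsFractionRing.div_surjective (A := D) (K := K) (y / x)
      have hb0 : b ≠ 0 := nonZeroDivisors.ne_zero hbmem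
      have hb' : algebraMap D K b ≠ 0 :=
        (map_ne_zero_iff _ (IsFractionRing.injective D K)).mpr hb0
      have hyx : y / x ≠ 0 := div_ne_zero hy hx
      have ha0 : a ≠ 0 := by
        intro h
        rw [h, _root_.map_zero, zero_div] at hab
        exact hyx hab.symm
      set c := algebraMap D K b / x with hcdef
      have hc0 : c ≠ 0 := div_ne_zero hb' hx
      have hkey : spanSingleton (nonZeroDivisors D) c *
          (spanSingleton (nonZeroDivisors D) x + spanSingleton (nonZeroDivisors D) y)
          = spanSingleton (nonZeroDivisors D) (algebraMap D K a) +
            spanSingleton (nonZeroDivisors D) (algebraMap D K b) := by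
        rw [mul_add, spanSingleton_mul_spanSingleton, spanSingleton_mul_spanSingleton]
        have hcx : c * x = algebraMap D K b := by
          rw [hcdef, div_mul_cancel₀ _ hx]
        have hcy : c * y = algebraMap D K a := by
          rw [hcdef, div_mul_eq_mul_div, mul_comm, ← div_mul_eq_mul_div, ← hab,
            div_mul_eq_mul_div, mul_comm, ← div_mul_eq_mul_div, div_self hb', one_mul]
        rw [hcx, hcy, add_comm]
      have hF2 : (spanSingleton (nonZeroDivisors D) x + spanSingleton (nonZeroDivisors D) y) ≠ 0 :=
        add_ne_zero_left (spanSingleton_ne_zero_iff.mpr hx) _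
      have hG : s.star ((spanSingleton (nonZeroDivisors D) (algebraMap D K a) +
          spanSingleton (nonZeroDivisors D) (algebraMap D K b)) *
          (spanSingleton (nonZeroDivisors D) (algebraMap D K a) +
          spanSingleton (nonZeroDivisors D) (algebraMap D K b))⁻¹) = 1 := by
        rw [← coe_colon_sum a b ha0 hb0]
        exact H a b ha0 hb0
      show s.star _ = 1
      rw [← smul_mul_smul_inv hF2 hc0, hkey]
      exact hG
    classical
    obtain ⟨T, hT⟩ := hFG
    set S := T.erase 0 with hSdef
    have hspan : Submodule.span D (↑S : Set K) = (F : Submodule D K) := by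
      rw [← hT]
      apply le_antisymm
      · exact Submodule.span_mono (by simp [hSdef, Finset.erase_subset])
      · rw [Submodule.span_le]
        intro t ht
        by_cases ht0 : t = 0
        · rw [ht0]; exact Submodule.zero_mem _
        · exact Submodule.subset_span (Finset.mem_erase.mpr ⟨ht0, ht⟩)
    have hFsum : F = ∑ x ∈ S, spanSingleton (nonZeroDivisors D) x :=
      coeToSubmodule_injective (((coe_finset_sum (D := D) S).trans hspan).symm)
    have hSne : S.Nonempty := by
      rw [Finset.nonempty_iff_ne_empty]
      intro h
      apply hF
      rw [hFsum, h, Finset.sum_empty]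
    have := sinv_finset s h2 S.card S le_rfl hSne (fun x hx => (Finset.mem_erase.mp hx).1)
    rw [hFsum]
    exact this
end
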